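/- arXiv:0802.0156 — 2 statements merged into one kernel-verified Lean document; each statement's English description precedes it below -/
import Mathlib

section
/- Let T' be an inductive continuous first-order theory. Then 𝔖_{T'} is a G_δ subset of the Polish space 𝔖. -/
open scoped Classical

/-! ### A core of continuous first-order logic (countable relational signatures) -/

/-- A countable relational continuous signature: relation symbols indexed by `ℕ`
(with a distinguished metric symbol handled separately in the syntax below),
each with an arity and a prescribed uniform-continuity modulus. -/
structure CSig where
  arity : ℕ → ℕ
  modulus : ℕ → ℝ → ℝ
  modulus_pos : ∀ i ε, 0 < ε → 0 < modulus i ε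

/-- Continuous first-order formulas over `S`, with free variables among `Fin n`.
Connectives: rational constants, pointwise min and max, negation `1 - x`,
truncated plus, truncated minus, `|x - y|`, rescaling by rationals; quantifiers
`inf` and `sup` bind the last variable. -/
inductive CFormula (S : CSig) : ℕ → Type
  | dst : ∀ {n}, Fin n → Fin n → CFormula S n
  | rel : ∀ {n} (i : ℕ), (Fin (S.arity i) → Fin n) → CFormula S n
  | const : ∀ {n}, ℚ → CFormula S n
  | fmin : ∀ {n}, CFormula S n → CFormula S n → CFormula S n
  | fmax : ∀ {n}, CFormula S n → CFormula S n → CFormula S n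
  | neg : ∀ {n}, CFormula S n → CFormula S n
  | addT : ∀ {n}, CFormula S n → CFormula S n → CFormula S n
  | subT : ∀ {n}, CFormula S n → CFormula S n → CFormula S n
  | absd : ∀ {n}, CFormula S n → CFormula S n → CFormula S n
  | scale : ∀ {n}, ℚ → CFormula S n → CFormula S n
  | inf : ∀ {n}, CFormula S (n + 1) → CFormula S n
  | sup : ∀ {n}, CFormula S (n + 1) → CFormula S n

/-- Sentences: formulas with no free variables. -/
abbrev CSentence (S : CSig) := CFormula S 0

/-- Quantifier-free formulas. -/
inductive IsQF {S : CSig} : ∀ {n}, CFormula S n → Prop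
  | dst {n} (a b : Fin n) : IsQF (CFormula.dst a b)
  | rel {n} (i : ℕ) (ts : Fin (S.arity i) → Fin n) : IsQF (CFormula.rel i ts)
  | const {n} (q : ℚ) : IsQF (CFormula.const (n := n) q)
  | fmin {n} {φ ψ : CFormula S n} : IsQF φ → IsQF ψ → IsQF (CFormula.fmin φ ψ)
  | fmax {n} {φ ψ : CFormula S n} : IsQF φ → IsQF ψ → IsQF (CFormula.fmax φ ψ)
  | neg {n} {φ : CFormula S n} : IsQF φ → IsQF (CFormula.neg φ)
  | addT {n} {φ ψ : CFormula S n} : IsQF φ → IsQF ψ → IsQF (CFormula.addT φ ψ)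
  | subT {n} {φ ψ : CFormula S n} : IsQF φ → IsQF ψ → IsQF (CFormula.subT φ ψ)
  | absd {n} {φ ψ : CFormula S n} : IsQF φ → IsQF ψ → IsQF (CFormula.absd φ ψ)
  | scale {n} (q : ℚ) {φ : CFormula S n} : IsQF φ → IsQF (CFormula.scale q φ)

/-- Closure of a class of formulas under (finitely many applications of) `inf`. -/
inductive InfCl {S : CSig} (P : ∀ n, CFormula S n → Prop) : ∀ {n}, CFormula S n → Prop
  | base {n} {φ : CFormula S n} : P n φ → InfCl P φ
  | step {n} {φ : CFormula S (n + 1)} : InfCl P φ → InfCl P (CFormula.inf φ)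

/-- Closure of a class of formulas under (finitely many applications of) `sup`. -/
inductive SupCl {S : CSig} (P : ∀ n, CFormula S n → Prop) : ∀ {n}, CFormula S n → Prop
  | base {n} {φ : CFormula S n} : P n φ → SupCl P φ
  | step {n} {φ : CFormula S (n + 1)} : SupCl P φ → SupCl P (CFormula.sup φ)

/-- The pair (Σₖ, Πₖ) of formula classes: Σ₀ = Π₀ = quantifier-free,
Σ_{k+1} = { inf_x̄ φ : φ ∈ Πₖ }, Π_{k+1} = { sup_x̄ φ : φ ∈ Σₖ }. -/
def SigmaPi (S : CSig) : ℕ → ((∀ n, CFormula S n → Prop) × (∀ n, CFormula S n → Prop))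
  | 0 => (fun _ φ => IsQF φ, fun _ φ => IsQF φ)
  | k + 1 => (fun _ φ => InfCl (SigmaPi S k).2 φ, fun _ φ => SupCl (SigmaPi S k).1 φ)

/-- `φ` is a Σₖ formula. -/
def IsSigmaN (S : CSig) (k : ℕ) {n : ℕ} (φ : CFormula S n) : Prop := (SigmaPi S k).1 n φ

/-- `φ` is a Πₖ formula. -/
def IsPiN (S : CSig) (k : ℕ) {n : ℕ} (φ : CFormula S n) : Prop := (SigmaPi S k).2 n φ

/-- A continuous `L`-structure: a nonempty complete metric space of diameter `≤ 1`
with `[0,1]`-valued interpretations of all predicate symbols, uniformly continuous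
with respect to the prescribed moduli. -/
structure CStructure (S : CSig) where
  Carrier : Type
  metric : MetricSpace Carrier
  nonempty : Nonempty Carrier
  complete : @CompleteSpace Carrier metric.toUniformSpace
  bounded : ∀ x y : Carrier, @dist Carrier metric.toDist x y ≤ 1
  rel : ∀ i, (Fin (S.arity i) → Carrier) → ℝ
  rel_nonneg : ∀ i v, 0 ≤ rel i v
  rel_le_one : ∀ i v, rel i v ≤ 1
  rel_uc : ∀ i (ε : ℝ), 0 < ε → ∀ v w,
    (∀ j, @dist Carrier metric.toDist (v j) (w j) < S.modulus i ε) → |rel i v - rel i w| ≤ ε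

attribute [instance] CStructure.metric CStructure.nonempty CStructure.complete

/-- Clamp a rational constant into `[0,1]`. -/
noncomputable def clampQ (q : ℚ) : ℝ := max 0 (min 1 (q : ℝ))

/-- The value of a formula in a structure under a variable assignment. -/
noncomputable def CStructure.eval {S : CSig} (M : CStructure S) :
    ∀ (n : ℕ), CFormula S n → (Fin n → M.Carrier) → ℝ
  | _, .dst a b, v => dist (v a) (v b)
  | _, .rel i ts, v => M.rel i fun j => v (ts j)
  | _, .const q, _ => clampQ q
  | n, .fmin φ ψ, v => min (M.eval n φ v) (M.eval n ψ v)
  | n, .fmax φ ψ, v => max (M.eval n φ v) (M.eval n ψ v)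
  | n, .neg φ, v => 1 - M.eval n φ v
  | n, .addT φ ψ, v => min 1 (M.eval n φ v + M.eval n ψ v)
  | n, .subT φ ψ, v => max 0 (M.eval n φ v - M.eval n ψ v)
  | n, .absd φ ψ, v => |M.eval n φ v - M.eval n ψ v|
  | n, .scale q φ, v => clampQ q * M.eval n φ v
  | n, .inf φ, v => ⨅ x : M.Carrier, M.eval (n + 1) φ (Fin.snoc v x)
  | n, .sup φ, v => ⨆ x : M.Carrier, M.eval (n + 1) φ (Fin.snoc v x)

/-- The value of a sentence in a structure. -/
noncomputable def CStructure.sval {S : CSig} (M : CStructure S) (φ : CSentence S) : ℝ :=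
  M.eval 0 φ (fun i => i.elim0)

/-- A theory: a set of closed conditions `φ ≤ ε`, coded as pairs `(φ, ε)`. -/
abbrev CTheory (S : CSig) := Set (CSentence S × ℝ)

/-- `M` satisfies the theory `T` (all its closed conditions). -/
def CStructure.SatT {S : CSig} (M : CStructure S) (T : CTheory S) : Prop :=
  ∀ c ∈ T, M.sval c.1 ≤ c.2

/-- The closed condition `φ ≤ ε` follows from `T`. -/
def Entails {S : CSig} (T : CTheory S) (c : CSentence S × ℝ) : Prop :=
  ∀ M : CStructure S, M.SatT T → M.sval c.1 ≤ c.2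

/-- The open condition `φ < ε` follows from `T`. -/
def EntailsOpen {S : CSig} (T : CTheory S) (c : CSentence S × ℝ) : Prop :=
  ∀ M : CStructure S, M.SatT T → M.sval c.1 < c.2

/-- `T` is a theory in the official sense: consistent and closed under entailment. -/
def IsTheory {S : CSig} (T : CTheory S) : Prop :=
  (∃ M : CStructure S, M.SatT T) ∧ ∀ c, Entails T c → c ∈ T

/-- `T` is universal: axiomatizable by closed conditions `sup_x̄ φ(x̄) = 0` with `φ`
quantifier-free (i.e. by conditions `ψ = 0` for Π₁ sentences `ψ`). -/
def IsUniversalTheory {S : CSig} (T : CTheory S) : Prop :=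
  ∃ A : Set (CSentence S), (∀ ψ ∈ A, IsPiN S 1 ψ) ∧
    ∀ M : CStructure S, (M.SatT T ↔ ∀ ψ ∈ A, M.sval ψ = 0)

/-- `T` is inductive: axiomatizable by open conditions `sup_x̄ inf_ȳ φ(x̄,ȳ) < ε` with `φ`
quantifier-free (i.e. by open conditions on Π₂ sentences). -/
def IsInductiveTheory {S : CSig} (T : CTheory S) : Prop :=
  ∃ A : Set (CSentence S × ℝ), (∀ c ∈ A, IsPiN S 2 c.1 ∧ 0 < c.2) ∧
    ∀ M : CStructure S, (M.SatT T ↔ ∀ c ∈ A, M.sval c.1 < c.2)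

/-- An embedding of continuous structures: an isometric map preserving all predicates. -/
structure CEmbedding {S : CSig} (M N : CStructure S) where
  toFun : M.Carrier → N.Carrier
  isometry : ∀ x y, dist (toFun x) (toFun y) = dist x y
  map_rel : ∀ i (v : Fin (S.arity i) → M.Carrier), N.rel i (toFun ∘ v) = M.rel i v

/-- An embedding is elementary if it preserves the values of all formulas. -/
def CEmbedding.Elementary {S : CSig} {M N : CStructure S} (f : CEmbedding M N) : Prop :=
  ∀ (n : ℕ) (φ : CFormula S n) (v : Fin n → M.Carrier),
    N.eval n φ (f.toFun ∘ v) = M.eval n φ v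

/-- `T` is model complete: every embedding between models of `T` is elementary. -/
def IsModelComplete {S : CSig} (T : CTheory S) : Prop :=
  ∀ M N : CStructure S, M.SatT T → N.SatT T → ∀ f : CEmbedding M N, f.Elementary

/-- `M` is an existentially closed model of `T`. -/
def IsEC {S : CSig} (T : CTheory S) (M : CStructure S) : Prop :=
  M.SatT T ∧ ∀ N : CStructure S, N.SatT T → ∀ f : CEmbedding M N,
    ∀ (n : ℕ) (φ : CFormula S (n + 1)), IsQF φ → ∀ b : Fin n → M.Carrier,
      N.eval n (CFormula.inf φ) (f.toFun ∘ b) = M.eval n (CFormula.inf φ) b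

/-- `T'` is the model companion of `T`: the models of `T'` are exactly the
existentially closed models of `T`. -/
def IsModelCompanion {S : CSig} (T T' : CTheory S) : Prop :=
  ∀ M : CStructure S, (M.SatT T' ↔ IsEC T M)

/-- `T'` is ℵ₀-categorical: any two separable models of `T'` are isomorphic. -/
def Aleph0Categorical {S : CSig} (T' : CTheory S) : Prop :=
  ∀ M N : CStructure S, M.SatT T' → N.SatT T' →
    TopologicalSpace.SeparableSpace M.Carrier → TopologicalSpace.SeparableSpace N.Carrier →
    ∃ f : CEmbedding M N, Function.Surjective f.toFun

/-! ### The Polish space `𝔖` of codes of separable structures -/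

/-- A point of `𝔖`: a separable continuous `L`-structure presented on a distinguished
countable dense subset indexed by `ℕ` — i.e. the metric and all predicate values on `ℕ`,
subject to the metric axioms and the uniform-continuity moduli. The actual structure is
the completion; since all predicates and the quantifiers are continuous, all the
first-order data is determined by this code. -/
structure SCode (S : CSig) where
  dd : ℕ → ℕ → ℝ
  R : ∀ i, (Fin (S.arity i) → ℕ) → ℝ
  dd_nonneg : ∀ i j, 0 ≤ dd i j
  dd_le_one : ∀ i j, dd i j ≤ 1
  dd_self : ∀ i, dd i i = 0
  dd_pos : ∀ i j, i ≠ j → 0 < dd i j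
  dd_symm : ∀ i j, dd i j = dd j i
  dd_triangle : ∀ i j k, dd i k ≤ dd i j + dd j k
  R_nonneg : ∀ i v, 0 ≤ R i v
  R_le_one : ∀ i v, R i v ≤ 1
  R_uc : ∀ i (ε : ℝ), 0 < ε → ∀ v w,
    (∀ j, dd (v j) (w j) < S.modulus i ε) → |R i v - R i w| ≤ ε

/-- Value of a formula on a code, under an assignment of variables to points of the
distinguished dense subset; quantifiers range over the dense subset (equivalently,
by uniform continuity, over the completion). -/
noncomputable def SCode.eval {S : CSig} (x : SCode S) :
    ∀ (n : ℕ), CFormula S n → (Fin n → ℕ) → ℝ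
  | _, .dst a b, v => x.dd (v a) (v b)
  | _, .rel i ts, v => x.R i fun j => v (ts j)
  | _, .const q, _ => clampQ q
  | n, .fmin φ ψ, v => min (x.eval n φ v) (x.eval n ψ v)
  | n, .fmax φ ψ, v => max (x.eval n φ v) (x.eval n ψ v)
  | n, .neg φ, v => 1 - x.eval n φ v
  | n, .addT φ ψ, v => min 1 (x.eval n φ v + x.eval n ψ v)
  | n, .subT φ ψ, v => max 0 (x.eval n φ v - x.eval n ψ v)
  | n, .absd φ ψ, v => |x.eval n φ v - x.eval n ψ v|
  | n, .scale q φ, v => clampQ q * x.eval n φ v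
  | n, .inf φ, v => ⨅ k : ℕ, x.eval (n + 1) φ (Fin.snoc v k)
  | n, .sup φ, v => ⨆ k : ℕ, x.eval (n + 1) φ (Fin.snoc v k)

/-- The value of a sentence on a code. -/
noncomputable def SCode.sval {S : CSig} (x : SCode S) (φ : CSentence S) : ℝ :=
  x.eval 0 φ (fun i => i.elim0)

/-- The structure coded by `x` satisfies the theory `T`. -/
def SCode.SatT {S : CSig} (x : SCode S) (T : CTheory S) : Prop :=
  ∀ c ∈ T, x.sval c.1 ≤ c.2

/-- The basic open set `U_{φ(ā),ε} = {x ∈ 𝔖 : φ^x(ā) < ε}`. -/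
def basicSet {S : CSig} (n : ℕ) (φ : CFormula S n) (a : Fin n → ℕ) (ε : ℝ) :
    Set (SCode S) :=
  {x | x.eval n φ a < ε}

/-- The topology on `𝔖` generated by the basic open sets `U_{φ(ā),ε}` for `φ`
quantifier-free, `ā` a tuple from the distinguished dense subset and `ε > 0`. -/
instance SCode.topologicalSpace (S : CSig) : TopologicalSpace (SCode S) :=
  TopologicalSpace.generateFrom
    {U | ∃ (n : ℕ) (φ : CFormula S n) (a : Fin n → ℕ) (ε : ℝ),
      IsQF φ ∧ 0 < ε ∧ U = basicSet n φ a ε}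

/-- `x` codes the structure `M`: the distinguished countable dense subset maps to a dense
sequence in `M` realizing exactly the metric and predicate values recorded in `x`
(i.e. `M` is "the completion" of `x`). For a fixed `M`, `{x ∈ 𝔖 : Codes x M}` is
precisely the isomorphism class of `M` in `𝔖`. -/
def Codes {S : CSig} (x : SCode S) (M : CStructure S) : Prop :=
  ∃ u : ℕ → M.Carrier, DenseRange u ∧ (∀ i j, dist (u i) (u j) = x.dd i j) ∧
    ∀ i (v : Fin (S.arity i) → ℕ), M.rel i (u ∘ v) = x.R i v

/-! ### Auxiliary development -/

namespace GdAux

open Filter Topology Set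

variable {S : CSig}

/-- Encoding of formulas into `ℕ`. -/
def fenc : ∀ {n : ℕ}, CFormula S n → ℕ
  | _, .dst a b => Nat.pair 0 (Nat.pair a.val b.val)
  | _, .rel i ts => Nat.pair 1 (Nat.pair i (Encodable.encode (List.ofFn fun j => (ts j).val)))
  | _, .const q => Nat.pair 2 (Encodable.encode q)
  | _, .fmin φ ψ => Nat.pair 3 (Nat.pair (fenc φ) (fenc ψ))
  | _, .fmax φ ψ => Nat.pair 4 (Nat.pair (fenc φ) (fenc ψ))
  | _, .neg φ => Nat.pair 5 (fenc φ)
  | _, .addT φ ψ => Nat.pair 6 (Nat.pair (fenc φ) (fenc ψ))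
  | _, .subT φ ψ => Nat.pair 7 (Nat.pair (fenc φ) (fenc ψ))
  | _, .absd φ ψ => Nat.pair 8 (Nat.pair (fenc φ) (fenc ψ))
  | _, .scale q φ => Nat.pair 9 (Nat.pair (Encodable.encode q) (fenc φ))
  | _, .inf φ => Nat.pair 10 (fenc φ)
  | _, .sup φ => Nat.pair 11 (fenc φ)

theorem fenc_inj : ∀ {n : ℕ} (φ ψ : CFormula S n), fenc φ = fenc ψ → φ = ψ := by
  intro n φ
  induction φ with
  | dst a b =>
    intro ψ h; cases ψ <;> simp [fenc, Nat.pair_eq_pair] at h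
    obtain ⟨h1, h2⟩ := h
    rw [Fin.val_injective h1, Fin.val_injective h2]
  | rel i ts =>
    intro ψ h; cases ψ <;> simp [fenc, Nat.pair_eq_pair] at h
    obtain ⟨rfl, h2⟩ := h
    congr 1
    exact funext fun j => Fin.val_injective (congrFun (List.ofFn_inj.mp h2) j)
  | const q =>
    intro ψ h; cases ψ <;> simp [fenc, Nat.pair_eq_pair] at h
    rw [h]
  | fmin φ₁ φ₂ ih₁ ih₂ =>
    intro ψ h; cases ψ <;> simp [fenc, Nat.pair_eq_pair] at h
    rw [ih₁ _ h.1, ih₂ _ h.2]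
  | fmax φ₁ φ₂ ih₁ ih₂ =>
    intro ψ h; cases ψ <;> simp [fenc, Nat.pair_eq_pair] at h
    rw [ih₁ _ h.1, ih₂ _ h.2]
  | neg φ₁ ih₁ =>
    intro ψ h; cases ψ <;> simp [fenc, Nat.pair_eq_pair] at h
    rw [ih₁ _ h]
  | addT φ₁ φ₂ ih₁ ih₂ =>
    intro ψ h; cases ψ <;> simp [fenc, Nat.pair_eq_pair] at h
    rw [ih₁ _ h.1, ih₂ _ h.2]
  | subT φ₁ φ₂ ih₁ ih₂ =>
    intro ψ h; cases ψ <;> simp [fenc, Nat.pair_eq_pair] at h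
    rw [ih₁ _ h.1, ih₂ _ h.2]
  | absd φ₁ φ₂ ih₁ ih₂ =>
    intro ψ h; cases ψ <;> simp [fenc, Nat.pair_eq_pair] at h
    rw [ih₁ _ h.1, ih₂ _ h.2]
  | scale q φ₁ ih₁ =>
    intro ψ h; cases ψ <;> simp [fenc, Nat.pair_eq_pair] at h
    rw [h.1, ih₁ _ h.2]
  | inf φ₁ ih₁ =>
    intro ψ h; cases ψ <;> simp [fenc, Nat.pair_eq_pair] at h
    rw [ih₁ _ h]
  | sup φ₁ ih₁ =>
    intro ψ h; cases ψ <;> simp [fenc, Nat.pair_eq_pair] at h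
    rw [ih₁ _ h]

instance : Countable (CFormula S 0) :=
  ⟨⟨fenc, fun φ ψ h => fenc_inj φ ψ h⟩⟩

end GdAux

namespace GdAux

variable {S : CSig}

/-- Uniform continuity modulus for formulas. -/
noncomputable def fmod : ∀ {n : ℕ}, CFormula S n → ℝ → ℝ
  | _, .dst _ _, ε => ε / 2
  | _, .rel i _, ε => S.modulus i ε
  | _, .const _, _ => 1
  | _, .fmin φ ψ, ε => min (fmod φ (ε / 2)) (fmod ψ (ε / 2))
  | _, .fmax φ ψ, ε => min (fmod φ (ε / 2)) (fmod ψ (ε / 2))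
  | _, .neg φ, ε => fmod φ ε
  | _, .addT φ ψ, ε => min (fmod φ (ε / 2)) (fmod ψ (ε / 2))
  | _, .subT φ ψ, ε => min (fmod φ (ε / 2)) (fmod ψ (ε / 2))
  | _, .absd φ ψ, ε => min (fmod φ (ε / 2)) (fmod ψ (ε / 2))
  | _, .scale _ φ, ε => fmod φ ε
  | _, .inf φ, ε => fmod φ ε
  | _, .sup φ, ε => fmod φ ε

theorem fmod_pos : ∀ {n : ℕ} (φ : CFormula S n) {ε : ℝ}, 0 < ε → 0 < fmod φ ε := by
  intro n φ
  induction φ with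
  | dst a b => intro ε hε; exact half_pos hε
  | rel i ts => intro ε hε; exact S.modulus_pos i ε hε
  | const q => intro ε _; exact one_pos
  | fmin φ₁ φ₂ ih₁ ih₂ => intro ε hε; exact lt_min (ih₁ (half_pos hε)) (ih₂ (half_pos hε))
  | fmax φ₁ φ₂ ih₁ ih₂ => intro ε hε; exact lt_min (ih₁ (half_pos hε)) (ih₂ (half_pos hε))
  | neg φ₁ ih₁ => intro ε hε; exact ih₁ hε
  | addT φ₁ φ₂ ih₁ ih₂ => intro ε hε; exact lt_min (ih₁ (half_pos hε)) (ih₂ (half_pos hε))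
  | subT φ₁ φ₂ ih₁ ih₂ => intro ε hε; exact lt_min (ih₁ (half_pos hε)) (ih₂ (half_pos hε))
  | absd φ₁ φ₂ ih₁ ih₂ => intro ε hε; exact lt_min (ih₁ (half_pos hε)) (ih₂ (half_pos hε))
  | scale q φ₁ ih₁ => intro ε hε; exact ih₁ hε
  | inf φ₁ ih₁ => intro ε hε; exact ih₁ hε
  | sup φ₁ ih₁ => intro ε hε; exact ih₁ hε

theorem clampQ_nonneg (q : ℚ) : 0 ≤ clampQ q := le_max_left _ _

theorem clampQ_le_one (q : ℚ) : clampQ q ≤ 1 :=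
  max_le zero_le_one (min_le_left _ _)

end GdAux

/-- A pre-structure: like `CStructure` but only a pseudometric, possibly incomplete. -/
structure CPre (S : CSig) where
  Carrier : Type
  pm : PseudoMetricSpace Carrier
  nonempty : Nonempty Carrier
  bounded : ∀ x y : Carrier, @dist Carrier pm.toDist x y ≤ 1
  rel : ∀ i, (Fin (S.arity i) → Carrier) → ℝ
  rel_nonneg : ∀ i v, 0 ≤ rel i v
  rel_le_one : ∀ i v, rel i v ≤ 1
  rel_uc : ∀ i (ε : ℝ), 0 < ε → ∀ v w,
    (∀ j, @dist Carrier pm.toDist (v j) (w j) < S.modulus i ε) → |rel i v - rel i w| ≤ ε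

attribute [instance] CPre.pm CPre.nonempty

/-- Evaluation on a pre-structure; quantifiers range over the carrier. -/
noncomputable def CPre.eval {S : CSig} (P : CPre S) :
    ∀ (n : ℕ), CFormula S n → (Fin n → P.Carrier) → ℝ
  | _, .dst a b, v => dist (v a) (v b)
  | _, .rel i ts, v => P.rel i fun j => v (ts j)
  | _, .const q, _ => clampQ q
  | n, .fmin φ ψ, v => min (P.eval n φ v) (P.eval n ψ v)
  | n, .fmax φ ψ, v => max (P.eval n φ v) (P.eval n ψ v)
  | n, .neg φ, v => 1 - P.eval n φ v
  | n, .addT φ ψ, v => min 1 (P.eval n φ v + P.eval n ψ v)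
  | n, .subT φ ψ, v => max 0 (P.eval n φ v - P.eval n ψ v)
  | n, .absd φ ψ, v => |P.eval n φ v - P.eval n ψ v|
  | n, .scale q φ, v => clampQ q * P.eval n φ v
  | n, .inf φ, v => ⨅ x : P.Carrier, P.eval (n + 1) φ (Fin.snoc v x)
  | n, .sup φ, v => ⨆ x : P.Carrier, P.eval (n + 1) φ (Fin.snoc v x)

namespace GdAux

theorem bddBelow_range_of {ι : Sort*} {f : ι → ℝ} (h : ∀ i, 0 ≤ f i) :
    BddBelow (Set.range f) := ⟨0, by rintro y ⟨i, rfl⟩; exact h i⟩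

theorem bddAbove_range_of {ι : Sort*} {f : ι → ℝ} (h : ∀ i, f i ≤ 1) :
    BddAbove (Set.range f) := ⟨1, by rintro y ⟨i, rfl⟩; exact h i⟩

theorem eval_bdd (P : CPre S) : ∀ {n : ℕ} (φ : CFormula S n) (v : Fin n → P.Carrier),
    0 ≤ P.eval n φ v ∧ P.eval n φ v ≤ 1 := by
  intro n φ
  induction φ with
  | dst a b => intro v; exact ⟨dist_nonneg, P.bounded _ _⟩
  | rel i ts => intro v; exact ⟨P.rel_nonneg _ _, P.rel_le_one _ _⟩
  | const q => intro v; exact ⟨clampQ_nonneg q, clampQ_le_one q⟩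
  | fmin φ₁ φ₂ ih₁ ih₂ => intro v
                          exact ⟨le_min (ih₁ v).1 (ih₂ v).1, min_le_of_left_le (ih₁ v).2⟩
  | fmax φ₁ φ₂ ih₁ ih₂ => intro v
                          exact ⟨le_max_of_le_left (ih₁ v).1, max_le (ih₁ v).2 (ih₂ v).2⟩
  | neg φ₁ ih₁ => intro v
                  simp only [CPre.eval]
                  constructor <;> [linarith [(ih₁ v).2]; linarith [(ih₁ v).1]]
  | addT φ₁ φ₂ ih₁ ih₂ => intro v
                          exact ⟨le_min zero_le_one (add_nonneg (ih₁ v).1 (ih₂ v).1),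
                            min_le_left _ _⟩
  | subT φ₁ φ₂ ih₁ ih₂ => intro v
                          refine ⟨le_max_left _ _, max_le zero_le_one ?_⟩
                          linarith [(ih₁ v).2, (ih₂ v).1]
  | absd φ₁ φ₂ ih₁ ih₂ => intro v
                          refine ⟨abs_nonneg _, abs_le.mpr ⟨?_, ?_⟩⟩ <;>
                            [linarith [(ih₁ v).1, (ih₂ v).2]; linarith [(ih₁ v).2, (ih₂ v).1]]
  | scale q φ₁ ih₁ => intro v
                      exact ⟨mul_nonneg (clampQ_nonneg q) (ih₁ v).1,
                        mul_le_one₀ (clampQ_le_one q) (ih₁ v).1 (ih₁ v).2⟩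
  | inf φ₁ ih₁ =>
    intro v
    obtain ⟨x₀⟩ := P.nonempty
    refine ⟨Real.iInf_nonneg fun x => (ih₁ _).1, ?_⟩
    exact le_trans (ciInf_le (bddBelow_range_of fun x => (ih₁ _).1) x₀) (ih₁ _).2
  | sup φ₁ ih₁ =>
    intro v
    obtain ⟨x₀⟩ := P.nonempty
    refine ⟨?_, Real.iSup_le (fun x => (ih₁ _).2) zero_le_one⟩
    exact le_trans (ih₁ _).1 (le_ciSup (bddAbove_range_of fun x => (ih₁ _).2) x₀)

/-- `|⨅ f - ⨅ g| ≤ ε` from a pointwise bound. -/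
theorem abs_ciInf_sub_ciInf {ι : Type*} [Nonempty ι] {f g : ι → ℝ} {ε : ℝ}
    (hf : ∀ i, 0 ≤ f i) (hg : ∀ i, 0 ≤ g i) (h : ∀ i, |f i - g i| ≤ ε) :
    |(⨅ i, f i) - ⨅ i, g i| ≤ ε := by
  have key : ∀ (f g : ι → ℝ), (∀ i, 0 ≤ f i) → (∀ i, |f i - g i| ≤ ε) →
      (⨅ i, f i) - (⨅ i, g i) ≤ ε := by
    intro f g hf h
    have h1 : ∀ i, (⨅ i, f i) - ε ≤ g i := by
      intro i
      have h2 := abs_le.mp (h i)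
      have h3 := ciInf_le (bddBelow_range_of hf) i
      linarith
    have := le_ciInf h1
    linarith
  have h' : ∀ i, |g i - f i| ≤ ε := fun i => by rw [abs_sub_comm]; exact h i
  exact abs_le.mpr ⟨by linarith [key g f hg h'], by linarith [key f g hf h]⟩

end GdAux

namespace GdAux

variable {S : CSig}

theorem abs_ciSup_sub_ciSup {ι : Type*} [Nonempty ι] {f g : ι → ℝ} {ε : ℝ}
    (hf : ∀ i, f i ≤ 1) (hg : ∀ i, g i ≤ 1) (h : ∀ i, |f i - g i| ≤ ε) :
    |(⨆ i, f i) - ⨆ i, g i| ≤ ε := by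
  have key : ∀ (f g : ι → ℝ), (∀ i, g i ≤ 1) → (∀ i, |f i - g i| ≤ ε) →
      (⨆ i, f i) - (⨆ i, g i) ≤ ε := by
    intro f g hg h
    have h1 : ∀ i, f i ≤ (⨆ i, g i) + ε := by
      intro i
      have h2 := abs_le.mp (h i)
      have h3 := le_ciSup (bddAbove_range_of hg) i
      linarith
    have := ciSup_le h1
    linarith
  have h' : ∀ i, |g i - f i| ≤ ε := fun i => by rw [abs_sub_comm]; exact h i
  exact abs_le.mpr ⟨by linarith [key g f hf h'], by linarith [key f g hg h]⟩

/-- Uniform continuity of evaluation with modulus `fmod`. -/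
theorem eval_uc (P : CPre S) : ∀ {n : ℕ} (φ : CFormula S n) {ε : ℝ}, 0 < ε →
    ∀ v w : Fin n → P.Carrier, (∀ i, dist (v i) (w i) < fmod φ ε) →
      |P.eval n φ v - P.eval n φ w| ≤ ε := by
  intro n φ
  induction φ with
  | dst a b =>
    intro ε hε v w h
    simp only [CPre.eval]
    have h1 := h a
    have h2 := h b
    simp only [fmod] at h1 h2
    calc |dist (v a) (v b) - dist (w a) (w b)|
        = dist (dist (v a) (v b)) (dist (w a) (w b)) := (Real.dist_eq _ _).symm
      _ ≤ dist (v a) (w a) + dist (v b) (w b) := dist_dist_dist_le _ _ _ _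
      _ ≤ ε := by linarith
  | rel i ts =>
    intro ε hε v w h
    exact P.rel_uc i ε hε _ _ fun j => h (ts j)
  | const q => intro ε hε v w h; simp only [CPre.eval, sub_self, abs_zero]; linarith
  | fmin φ₁ φ₂ ih₁ ih₂ =>
    intro ε hε v w h
    simp only [CPre.eval]
    have h₁ := ih₁ (half_pos hε) v w fun i => lt_of_lt_of_le (h i) (min_le_left _ _)
    have h₂ := ih₂ (half_pos hε) v w fun i => lt_of_lt_of_le (h i) (min_le_right _ _)
    exact le_trans (abs_min_sub_min_le_max _ _ _ _) (max_le (by linarith) (by linarith))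
  | fmax φ₁ φ₂ ih₁ ih₂ =>
    intro ε hε v w h
    simp only [CPre.eval]
    have h₁ := ih₁ (half_pos hε) v w fun i => lt_of_lt_of_le (h i) (min_le_left _ _)
    have h₂ := ih₂ (half_pos hε) v w fun i => lt_of_lt_of_le (h i) (min_le_right _ _)
    exact le_trans (abs_max_sub_max_le_max _ _ _ _) (max_le (by linarith) (by linarith))
  | neg φ₁ ih₁ =>
    intro ε hε v w h
    simp only [CPre.eval]
    have h₁ := ih₁ hε v w h
    calc |1 - P.eval _ φ₁ v - (1 - P.eval _ φ₁ w)|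
        = |P.eval _ φ₁ w - P.eval _ φ₁ v| := by ring_nf
      _ ≤ ε := by rw [abs_sub_comm]; exact h₁
  | addT φ₁ φ₂ ih₁ ih₂ =>
    intro ε hε v w h
    simp only [CPre.eval]
    have h₁ := ih₁ (half_pos hε) v w fun i => lt_of_lt_of_le (h i) (min_le_left _ _)
    have h₂ := ih₂ (half_pos hε) v w fun i => lt_of_lt_of_le (h i) (min_le_right _ _)
    refine le_trans (abs_min_sub_min_le_max _ _ _ _) (max_le (by simp; linarith) ?_)
    calc |P.eval _ φ₁ v + P.eval _ φ₂ v - (P.eval _ φ₁ w + P.eval _ φ₂ w)|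
        = |(P.eval _ φ₁ v - P.eval _ φ₁ w) + (P.eval _ φ₂ v - P.eval _ φ₂ w)| := by ring_nf
      _ ≤ |P.eval _ φ₁ v - P.eval _ φ₁ w| + |P.eval _ φ₂ v - P.eval _ φ₂ w| := abs_add_le _ _
      _ ≤ ε := by linarith
  | subT φ₁ φ₂ ih₁ ih₂ =>
    intro ε hε v w h
    simp only [CPre.eval]
    have h₁ := ih₁ (half_pos hε) v w fun i => lt_of_lt_of_le (h i) (min_le_left _ _)
    have h₂ := ih₂ (half_pos hε) v w fun i => lt_of_lt_of_le (h i) (min_le_right _ _)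
    refine le_trans (abs_max_sub_max_le_max _ _ _ _) (max_le (by simp; linarith) ?_)
    calc |P.eval _ φ₁ v - P.eval _ φ₂ v - (P.eval _ φ₁ w - P.eval _ φ₂ w)|
        = |(P.eval _ φ₁ v - P.eval _ φ₁ w) + (P.eval _ φ₂ w - P.eval _ φ₂ v)| := by ring_nf
      _ ≤ |P.eval _ φ₁ v - P.eval _ φ₁ w| + |P.eval _ φ₂ w - P.eval _ φ₂ v| := abs_add_le _ _
      _ ≤ ε := by rw [abs_sub_comm (P.eval _ φ₂ w)]; linarith
  | absd φ₁ φ₂ ih₁ ih₂ =>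
    intro ε hε v w h
    simp only [CPre.eval]
    have h₁ := ih₁ (half_pos hε) v w fun i => lt_of_lt_of_le (h i) (min_le_left _ _)
    have h₂ := ih₂ (half_pos hε) v w fun i => lt_of_lt_of_le (h i) (min_le_right _ _)
    refine le_trans (abs_abs_sub_abs_le_abs_sub _ _) ?_
    calc |P.eval _ φ₁ v - P.eval _ φ₂ v - (P.eval _ φ₁ w - P.eval _ φ₂ w)|
        = |(P.eval _ φ₁ v - P.eval _ φ₁ w) + (P.eval _ φ₂ w - P.eval _ φ₂ v)| := by ring_nf
      _ ≤ |P.eval _ φ₁ v - P.eval _ φ₁ w| + |P.eval _ φ₂ w - P.eval _ φ₂ v| := abs_add_le _ _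
      _ ≤ ε := by rw [abs_sub_comm (P.eval _ φ₂ w)]; linarith
  | scale q φ₁ ih₁ =>
    intro ε hε v w h
    simp only [CPre.eval]
    have h₁ := ih₁ hε v w h
    calc |clampQ q * P.eval _ φ₁ v - clampQ q * P.eval _ φ₁ w|
        = clampQ q * |P.eval _ φ₁ v - P.eval _ φ₁ w| := by
          rw [← mul_sub, abs_mul, abs_of_nonneg (clampQ_nonneg q)]
      _ ≤ 1 * ε := mul_le_mul (clampQ_le_one q) h₁ (abs_nonneg _) zero_le_one
      _ = ε := one_mul ε
  | inf φ₁ ih₁ =>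
    intro ε hε v w h
    simp only [CPre.eval]
    refine abs_ciInf_sub_ciInf (fun x => (eval_bdd P φ₁ _).1) (fun x => (eval_bdd P φ₁ _).1)
      fun x => ih₁ hε _ _ ?_
    intro i
    refine Fin.lastCases ?_ ?_ i
    · simp only [Fin.snoc_last]
      simpa using fmod_pos φ₁ hε
    · intro j
      simp only [Fin.snoc_castSucc]
      exact h j
  | sup φ₁ ih₁ =>
    intro ε hε v w h
    simp only [CPre.eval]
    refine abs_ciSup_sub_ciSup (fun x => (eval_bdd P φ₁ _).2) (fun x => (eval_bdd P φ₁ _).2)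
      fun x => ih₁ hε _ _ ?_
    intro i
    refine Fin.lastCases ?_ ?_ i
    · simp only [Fin.snoc_last]
      simpa using fmod_pos φ₁ hε
    · intro j
      simp only [Fin.snoc_castSucc]
      exact h j

end GdAux

namespace GdAux

variable {S : CSig}

/-- View a structure as a pre-structure. -/
def _root_.CStructure.toPre (M : CStructure S) : CPre S where
  Carrier := M.Carrier
  pm := M.metric.toPseudoMetricSpace
  nonempty := M.nonempty
  bounded := M.bounded
  rel := M.rel
  rel_nonneg := M.rel_nonneg
  rel_le_one := M.rel_le_one
  rel_uc := M.rel_uc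

theorem eval_toPre (M : CStructure S) : ∀ {n : ℕ} (φ : CFormula S n) (v : Fin n → M.Carrier),
    M.eval n φ v = M.toPre.eval n φ v := by
  intro n φ
  induction φ with
  | dst a b => intro v; rfl
  | rel i ts => intro v; rfl
  | const q => intro v; rfl
  | fmin φ₁ φ₂ ih₁ ih₂ => intro v; simp only [CStructure.eval, CPre.eval, ih₁, ih₂]
  | fmax φ₁ φ₂ ih₁ ih₂ => intro v; simp only [CStructure.eval, CPre.eval, ih₁, ih₂]
  | neg φ₁ ih₁ => intro v; simp only [CStructure.eval, CPre.eval, ih₁]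
  | addT φ₁ φ₂ ih₁ ih₂ => intro v; simp only [CStructure.eval, CPre.eval, ih₁, ih₂]
  | subT φ₁ φ₂ ih₁ ih₂ => intro v; simp only [CStructure.eval, CPre.eval, ih₁, ih₂]
  | absd φ₁ φ₂ ih₁ ih₂ => intro v; simp only [CStructure.eval, CPre.eval, ih₁, ih₂]
  | scale q φ₁ ih₁ => intro v; simp only [CStructure.eval, CPre.eval, ih₁]
  | inf φ₁ ih₁ =>
    intro v
    show (⨅ x : M.Carrier, M.eval _ φ₁ (Fin.snoc v x)) =
      ⨅ x : M.Carrier, M.toPre.eval _ φ₁ (Fin.snoc v x)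
    exact iInf_congr fun x => ih₁ _
  | sup φ₁ ih₁ =>
    intro v
    show (⨆ x : M.Carrier, M.eval _ φ₁ (Fin.snoc v x)) =
      ⨆ x : M.Carrier, M.toPre.eval _ φ₁ (Fin.snoc v x)
    exact iSup_congr fun x => ih₁ _

theorem eval_bddM (M : CStructure S) {n : ℕ} (φ : CFormula S n) (v : Fin n → M.Carrier) :
    0 ≤ M.eval n φ v ∧ M.eval n φ v ≤ 1 := by
  rw [eval_toPre]; exact eval_bdd _ _ _

end GdAux

namespace GdAux

open UniformSpace Filter Topology

variable {S : CSig} (P : CPre S)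

/-- The embedding into the completion. -/
def emb : P.Carrier → Completion P.Carrier := fun a => (a : Completion P.Carrier)

theorem dist_emb (a b : P.Carrier) : dist (emb P a) (emb P b) = dist a b :=
  Completion.dist_eq a b

theorem denseRange_emb : DenseRange (emb P) := Completion.denseRange_coe

/-- An approximating point in the dense image. -/
noncomputable def appr (b : Completion P.Carrier) (m : ℕ) : P.Carrier :=
  (Metric.denseRange_iff.mp (denseRange_emb P) b (1 / (m + 1)) (by positivity)).choose

theorem appr_spec (b : Completion P.Carrier) (m : ℕ) :
    dist b (emb P (appr P b m)) < 1 / (m + 1) :=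
  (Metric.denseRange_iff.mp (denseRange_emb P) b (1 / (m + 1)) (by positivity)).choose_spec

theorem one_div_mono {m N : ℕ} (h : N ≤ m) : (1:ℝ) / (m + 1) ≤ 1 / (N + 1) := by
  apply one_div_le_one_div_of_le (by positivity)
  exact_mod_cast Nat.succ_le_succ h

noncomputable def relSeq (i : ℕ) (w : Fin (S.arity i) → Completion P.Carrier) (m : ℕ) : ℝ :=
  P.rel i fun j => appr P (w j) m

theorem appr_dist (b b' : Completion P.Carrier) (m m' : ℕ) :
    dist (appr P b m) (appr P b' m') < dist b b' + 1 / (m + 1) + 1 / (m' + 1) := by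
  rw [← dist_emb]
  have h1 := appr_spec P b m
  have h2 := appr_spec P b' m'
  have t : dist (emb P (appr P b m)) (emb P (appr P b' m')) ≤
      dist (emb P (appr P b m)) b + dist b b' + dist b' (emb P (appr P b' m')) :=
    dist_triangle4 _ _ _ _
  rw [dist_comm (emb P (appr P b m)) b] at t
  linarith

theorem relSeq_cauchy (i : ℕ) (w : Fin (S.arity i) → Completion P.Carrier) :
    CauchySeq (relSeq P i w) := by
  rw [Metric.cauchySeq_iff']
  intro ε hε
  obtain ⟨N, hN⟩ := exists_nat_one_div_lt (show (0:ℝ) < S.modulus i (ε / 2) / 2 from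
    half_pos (S.modulus_pos i _ (half_pos hε)))
  refine ⟨N, fun m hm => ?_⟩
  have key : ∀ j, dist (appr P (w j) m) (appr P (w j) N) < S.modulus i (ε / 2) := by
    intro j
    have h := appr_dist P (w j) (w j) m N
    rw [dist_self] at h
    have := one_div_mono (m := m) (N := N) hm
    linarith
  have := P.rel_uc i (ε / 2) (half_pos hε) _ _ key
  rw [Real.dist_eq]
  exact lt_of_le_of_lt this (by linarith)

noncomputable def Frel (i : ℕ) (w : Fin (S.arity i) → Completion P.Carrier) : ℝ :=
  (cauchySeq_tendsto_of_complete (relSeq_cauchy P i w)).choose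

theorem Frel_tendsto (i : ℕ) (w : Fin (S.arity i) → Completion P.Carrier) :
    Tendsto (relSeq P i w) atTop (nhds (Frel P i w)) :=
  (cauchySeq_tendsto_of_complete (relSeq_cauchy P i w)).choose_spec

theorem Frel_coe (i : ℕ) (v : Fin (S.arity i) → P.Carrier) :
    Frel P i (fun j => emb P (v j)) = P.rel i v := by
  refine tendsto_nhds_unique (Frel_tendsto P i _) ?_
  rw [Metric.tendsto_atTop]
  intro ε hε
  obtain ⟨N, hN⟩ := exists_nat_one_div_lt (show (0:ℝ) < S.modulus i (ε / 2) from
    S.modulus_pos i _ (half_pos hε))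
  refine ⟨N, fun m hm => ?_⟩
  have key : ∀ j, dist (appr P (emb P (v j)) m) (v j) < S.modulus i (ε / 2) := by
    intro j
    have h1 := appr_spec P (emb P (v j)) m
    rw [← dist_emb, dist_comm]
    have := one_div_mono (m := m) (N := N) hm
    calc dist (emb P (v j)) (emb P (appr P (emb P (v j)) m)) < 1 / (m + 1) := h1
      _ ≤ 1 / (N + 1) := this
      _ < S.modulus i (ε / 2) := hN
  have := P.rel_uc i (ε / 2) (half_pos hε) _ _ key
  rw [Real.dist_eq]
  exact lt_of_le_of_lt this (by linarith)

theorem Frel_nonneg (i : ℕ) (w : Fin (S.arity i) → Completion P.Carrier) : 0 ≤ Frel P i w :=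
  ge_of_tendsto (Frel_tendsto P i w) (Filter.Eventually.of_forall fun m => P.rel_nonneg _ _)

theorem Frel_le_one (i : ℕ) (w : Fin (S.arity i) → Completion P.Carrier) : Frel P i w ≤ 1 :=
  le_of_tendsto (Frel_tendsto P i w) (Filter.Eventually.of_forall fun m => P.rel_le_one _ _)

theorem Frel_uc (i : ℕ) (ε : ℝ) (hε : 0 < ε) (w w' : Fin (S.arity i) → Completion P.Carrier)
    (h : ∀ j, dist (w j) (w' j) < S.modulus i ε) : |Frel P i w - Frel P i w'| ≤ ε := by
  by_cases hk : Nonempty (Fin (S.arity i))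
  · have hδ0 : 0 < S.modulus i ε := S.modulus_pos i ε hε
    obtain ⟨c, hcδ, hc⟩ : ∃ c, c < S.modulus i ε ∧ ∀ j, dist (w j) (w' j) ≤ c := by
      refine ⟨Finset.univ.sup' (by simpa using hk) (fun j => dist (w j) (w' j)), ?_, ?_⟩
      · exact (Finset.sup'_lt_iff _).mpr fun j _ => h j
      · intro j; exact Finset.le_sup' (fun j => dist (w j) (w' j)) (Finset.mem_univ j)
    obtain ⟨N, hN⟩ := exists_nat_one_div_lt (show (0:ℝ) < (S.modulus i ε - c) / 2 by linarith)
    have key : ∀ m, N ≤ m → |relSeq P i w m - relSeq P i w' m| ≤ ε := by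
      intro m hm
      refine P.rel_uc i ε hε _ _ fun j => ?_
      have h1 := appr_dist P (w j) (w' j) m m
      have h2 := one_div_mono (m := m) (N := N) hm
      have h3 := hc j
      linarith
    have htend : Tendsto (fun m => |relSeq P i w m - relSeq P i w' m|) atTop
        (nhds (|Frel P i w - Frel P i w'|)) :=
      ((Frel_tendsto P i w).sub (Frel_tendsto P i w')).abs
    exact le_of_tendsto htend (eventually_atTop.mpr ⟨N, key⟩)
  · have : w = w' := funext fun j => absurd ⟨j⟩ hk
    rw [this, sub_self, abs_zero]
    exact le_of_lt hε

/-- The completion of a pre-structure, as a genuine structure. -/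
noncomputable def _root_.CPre.toC (P : CPre S) : CStructure S where
  Carrier := Completion P.Carrier
  metric := inferInstance
  nonempty := ⟨emb P (Classical.choice P.nonempty)⟩
  complete := inferInstance
  bounded := by
    intro x y
    refine Completion.induction_on₂ x y ?_ ?_
    · exact isClosed_le (by fun_prop) continuous_const
    · intro a b
      rw [Completion.dist_eq]
      exact P.bounded a b
  rel := Frel P
  rel_nonneg := Frel_nonneg P
  rel_le_one := Frel_le_one P
  rel_uc := Frel_uc P

end GdAux

namespace GdAux

open UniformSpace Filter Topology

variable {S : CSig} (P : CPre S)

theorem toC_carrier : (P.toC).Carrier = Completion P.Carrier := rfl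

theorem toC_dist (a b : Completion P.Carrier) :
    @dist _ (P.toC).metric.toDist a b = dist a b := rfl

/-- Infimum over a dense image equals infimum over the space, for uniformly
continuous bounded functions. -/
theorem iInf_dense {f : Completion P.Carrier → ℝ}
    (hb : ∀ x, 0 ≤ f x)
    (hc : ∀ ε : ℝ, 0 < ε → ∃ δ : ℝ, 0 < δ ∧ ∀ x y, dist x y < δ → |f x - f y| ≤ ε) :
    (⨅ x : Completion P.Carrier, f x) = ⨅ a : P.Carrier, f (emb P a) := by
  have hne : Nonempty P.Carrier := P.nonempty
  have hne2 : Nonempty (Completion P.Carrier) := ⟨emb P (Classical.choice P.nonempty)⟩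
  refine le_antisymm (le_ciInf fun a => ciInf_le (bddBelow_range_of hb) (emb P a)) ?_
  have key : ∀ ε : ℝ, 0 < ε → (⨅ a : P.Carrier, f (emb P a)) - ε ≤
      ⨅ x : Completion P.Carrier, f x := by
    intro ε hε
    refine le_ciInf fun x => ?_
    obtain ⟨δ, hδ, hf⟩ := hc ε hε
    obtain ⟨a, ha⟩ := Metric.denseRange_iff.mp (denseRange_emb P) x δ hδ
    have h1 : |f x - f (emb P a)| ≤ ε := hf _ _ ha
    have h2 : (⨅ a : P.Carrier, f (emb P a)) ≤ f (emb P a) :=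
      ciInf_le (bddBelow_range_of fun a => hb _) a
    have := abs_le.mp h1
    linarith
  by_contra hlt
  push_neg at hlt
  obtain ⟨ε, hε1, hε2⟩ := exists_between (sub_pos.mpr hlt)
  have := key ε hε1
  linarith

theorem iSup_dense {f : Completion P.Carrier → ℝ}
    (hb : ∀ x, f x ≤ 1)
    (hc : ∀ ε : ℝ, 0 < ε → ∃ δ : ℝ, 0 < δ ∧ ∀ x y, dist x y < δ → |f x - f y| ≤ ε) :
    (⨆ x : Completion P.Carrier, f x) = ⨆ a : P.Carrier, f (emb P a) := by
  have hne : Nonempty P.Carrier := P.nonempty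
  have hne2 : Nonempty (Completion P.Carrier) := ⟨emb P (Classical.choice P.nonempty)⟩
  refine le_antisymm ?_ (ciSup_le fun a => le_ciSup (bddAbove_range_of hb) (emb P a))
  have key : ∀ ε : ℝ, 0 < ε → (⨆ x : Completion P.Carrier, f x) ≤
      (⨆ a : P.Carrier, f (emb P a)) + ε := by
    intro ε hε
    refine ciSup_le fun x => ?_
    obtain ⟨δ, hδ, hf⟩ := hc ε hε
    obtain ⟨a, ha⟩ := Metric.denseRange_iff.mp (denseRange_emb P) x δ hδ
    have h1 : |f x - f (emb P a)| ≤ ε := hf _ _ ha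
    have h2 : f (emb P a) ≤ ⨆ a : P.Carrier, f (emb P a) :=
      le_ciSup (bddAbove_range_of fun a => hb _) a
    have := abs_le.mp h1
    linarith
  by_contra hlt
  push_neg at hlt
  obtain ⟨ε, hε1, hε2⟩ := exists_between (sub_pos.mpr hlt)
  have := key ε hε1
  linarith

/-- Key transfer: evaluation in the completion agrees with evaluation in the
pre-structure. -/
theorem eval_toC : ∀ {n : ℕ} (φ : CFormula S n) (v : Fin n → P.Carrier),
    (P.toC).eval n φ (fun i => emb P (v i)) = P.eval n φ v := by
  intro n φ
  induction φ with
  | dst a b => intro v; exact Completion.dist_eq _ _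
  | rel i ts => intro v; exact Frel_coe P i _
  | const q => intro v; rfl
  | fmin φ₁ φ₂ ih₁ ih₂ => intro v; simp only [CStructure.eval, CPre.eval, ih₁, ih₂]
  | fmax φ₁ φ₂ ih₁ ih₂ => intro v; simp only [CStructure.eval, CPre.eval, ih₁, ih₂]
  | neg φ₁ ih₁ => intro v; simp only [CStructure.eval, CPre.eval, ih₁]
  | addT φ₁ φ₂ ih₁ ih₂ => intro v; simp only [CStructure.eval, CPre.eval, ih₁, ih₂]
  | subT φ₁ φ₂ ih₁ ih₂ => intro v; simp only [CStructure.eval, CPre.eval, ih₁, ih₂]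
  | absd φ₁ φ₂ ih₁ ih₂ => intro v; simp only [CStructure.eval, CPre.eval, ih₁, ih₂]
  | scale q φ₁ ih₁ => intro v; simp only [CStructure.eval, CPre.eval, ih₁]
  | inf φ₁ ih₁ =>
    intro v
    show (⨅ x : Completion P.Carrier,
        (P.toC).eval _ φ₁ (Fin.snoc (fun i => emb P (v i)) x)) = _
    rw [iInf_dense P (f := fun x => (P.toC).eval _ φ₁ (Fin.snoc (fun i => emb P (v i)) x))
      (fun x => (eval_bddM (P.toC) φ₁ _).1) ?_]
    · show (⨅ a : P.Carrier, (P.toC).eval _ φ₁ (Fin.snoc (fun i => emb P (v i)) (emb P a))) = _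
      have hsn : ∀ a : P.Carrier, Fin.snoc (fun i => emb P (v i)) (emb P a) =
          fun i => emb P ((Fin.snoc v a : Fin _ → P.Carrier) i) := by
        intro a
        exact (Fin.comp_snoc (emb P) v a).symm
      simp only [CPre.eval]
      refine iInf_congr fun a => ?_
      have := ih₁ (Fin.snoc v a); rw [← hsn a] at this; exact this
    · intro ε hε
      refine ⟨fmod φ₁ ε, fmod_pos φ₁ hε, fun x y hxy => ?_⟩
      have := eval_uc (P.toC).toPre φ₁ hε (Fin.snoc (fun i => emb P (v i)) x)
        (Fin.snoc (fun i => emb P (v i)) y) ?_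
      · convert this using 3 <;> exact eval_toPre _ _ _
      · intro i
        refine Fin.lastCases ?_ ?_ i
        · exact (congrArg₂ (fun a b => dist a b < fmod φ₁ ε)
            (@Fin.snoc_last _ (fun _ => Completion P.Carrier) _ _)
            (@Fin.snoc_last _ (fun _ => Completion P.Carrier) _ _)).mpr hxy
        · intro j
          have e1 : Fin.snoc (α := fun _ => Completion P.Carrier) (fun i => emb P (v i)) x
              j.castSucc = emb P (v j) := Fin.snoc_castSucc ..
          have e2 : Fin.snoc (α := fun _ => Completion P.Carrier) (fun i => emb P (v i)) y
              j.castSucc = emb P (v j) := Fin.snoc_castSucc ..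
          erw [e1, e2]
          erw [dist_self]
          exact fmod_pos φ₁ hε
  | sup φ₁ ih₁ =>
    intro v
    show (⨆ x : Completion P.Carrier,
        (P.toC).eval _ φ₁ (Fin.snoc (fun i => emb P (v i)) x)) = _
    rw [iSup_dense P (f := fun x => (P.toC).eval _ φ₁ (Fin.snoc (fun i => emb P (v i)) x))
      (fun x => (eval_bddM (P.toC) φ₁ _).2) ?_]
    · show (⨆ a : P.Carrier, (P.toC).eval _ φ₁ (Fin.snoc (fun i => emb P (v i)) (emb P a))) = _
      have hsn : ∀ a : P.Carrier, Fin.snoc (fun i => emb P (v i)) (emb P a) =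
          fun i => emb P ((Fin.snoc v a : Fin _ → P.Carrier) i) := by
        intro a
        exact (Fin.comp_snoc (emb P) v a).symm
      simp only [CPre.eval]
      refine iSup_congr fun a => ?_
      have := ih₁ (Fin.snoc v a); rw [← hsn a] at this; exact this
    · intro ε hε
      refine ⟨fmod φ₁ ε, fmod_pos φ₁ hε, fun x y hxy => ?_⟩
      have := eval_uc (P.toC).toPre φ₁ hε (Fin.snoc (fun i => emb P (v i)) x)
        (Fin.snoc (fun i => emb P (v i)) y) ?_
      · convert this using 3 <;> exact eval_toPre _ _ _
      · intro i
        refine Fin.lastCases ?_ ?_ i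
        · exact (congrArg₂ (fun a b => dist a b < fmod φ₁ ε)
            (@Fin.snoc_last _ (fun _ => Completion P.Carrier) _ _)
            (@Fin.snoc_last _ (fun _ => Completion P.Carrier) _ _)).mpr hxy
        · intro j
          have e1 : Fin.snoc (α := fun _ => Completion P.Carrier) (fun i => emb P (v i)) x
              j.castSucc = emb P (v j) := Fin.snoc_castSucc ..
          have e2 : Fin.snoc (α := fun _ => Completion P.Carrier) (fun i => emb P (v i)) y
              j.castSucc = emb P (v j) := Fin.snoc_castSucc ..
          erw [e1, e2]
          erw [dist_self]
          exact fmod_pos φ₁ hε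

theorem sval_toC (χ : CSentence S) :
    (P.toC).sval χ = P.eval 0 χ (fun i => i.elim0) := by
  have : (fun i : Fin 0 => i.elim0 : Fin 0 → (P.toC).Carrier) =
      fun i : Fin 0 => emb P (i.elim0) := funext fun i => i.elim0
  rw [CStructure.sval, this, eval_toC]

end GdAux

namespace GdAux

open Filter Topology

variable {S : CSig}

/-- The pre-structure coded by a point of `𝔖`. -/
noncomputable def codePre (x : SCode S) : CPre S where
  Carrier := ℕ
  pm := { dist := x.dd
          dist_self := x.dd_self
          dist_comm := x.dd_symm
          dist_triangle := x.dd_triangle }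
  nonempty := ⟨0⟩
  bounded := x.dd_le_one
  rel := x.R
  rel_nonneg := x.R_nonneg
  rel_le_one := x.R_le_one
  rel_uc := x.R_uc

theorem eval_codePre (x : SCode S) : ∀ {n : ℕ} (φ : CFormula S n) (v : Fin n → ℕ),
    x.eval n φ v = (codePre x).eval n φ v := by
  intro n φ
  induction φ with
  | dst a b => intro v; rfl
  | rel i ts => intro v; rfl
  | const q => intro v; rfl
  | fmin φ₁ φ₂ ih₁ ih₂ => intro v; simp only [SCode.eval, CPre.eval, ih₁, ih₂]
  | fmax φ₁ φ₂ ih₁ ih₂ => intro v; simp only [SCode.eval, CPre.eval, ih₁, ih₂]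
  | neg φ₁ ih₁ => intro v; simp only [SCode.eval, CPre.eval, ih₁]
  | addT φ₁ φ₂ ih₁ ih₂ => intro v; simp only [SCode.eval, CPre.eval, ih₁, ih₂]
  | subT φ₁ φ₂ ih₁ ih₂ => intro v; simp only [SCode.eval, CPre.eval, ih₁, ih₂]
  | absd φ₁ φ₂ ih₁ ih₂ => intro v; simp only [SCode.eval, CPre.eval, ih₁, ih₂]
  | scale q φ₁ ih₁ => intro v; simp only [SCode.eval, CPre.eval, ih₁]
  | inf φ₁ ih₁ =>
    intro v
    show (⨅ k : ℕ, x.eval _ φ₁ (Fin.snoc v k)) = ⨅ k : ℕ, (codePre x).eval _ φ₁ (Fin.snoc v k)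
    exact iInf_congr fun k => ih₁ _
  | sup φ₁ ih₁ =>
    intro v
    show (⨆ k : ℕ, x.eval _ φ₁ (Fin.snoc v k)) = ⨆ k : ℕ, (codePre x).eval _ φ₁ (Fin.snoc v k)
    exact iSup_congr fun k => ih₁ _

theorem code_eval_bdd (x : SCode S) {n : ℕ} (φ : CFormula S n) (v : Fin n → ℕ) :
    0 ≤ x.eval n φ v ∧ x.eval n φ v ≤ 1 := by
  rw [eval_codePre]; exact eval_bdd _ _ _

/-- The separable structure coded by `x`. -/
noncomputable def codeStr (x : SCode S) : CStructure S := (codePre x).toC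

theorem sval_codeStr (x : SCode S) (χ : CSentence S) : (codeStr x).sval χ = x.sval χ := by
  rw [codeStr, sval_toC, SCode.sval, eval_codePre]; rfl

theorem satT_iff (x : SCode S) (T : CTheory S) : x.SatT T ↔ (codeStr x).SatT T := by
  constructor <;> intro h c hc
  · rw [sval_codeStr]; exact h c hc
  · rw [← sval_codeStr x]; exact h c hc

/-! ### Topological complexity -/

theorem isOpen_qf {n : ℕ} (φ : CFormula S n) (hφ : IsQF φ) (a : Fin n → ℕ) (r : ℝ) :
    IsOpen {x : SCode S | x.eval n φ a < r} := by
  rcases le_or_gt r 0 with h | h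
  · have : {x : SCode S | x.eval n φ a < r} = ∅ := by
      ext x
      simp only [Set.mem_setOf_eq, Set.mem_empty_iff_false, iff_false, not_lt]
      exact le_trans h (code_eval_bdd x φ a).1
    rw [this]
    exact isOpen_empty
  · exact TopologicalSpace.GenerateOpen.basic _ ⟨n, φ, a, r, hφ, h, rfl⟩

theorem isOpen_sigma1 : ∀ {n : ℕ} {φ : CFormula S n}, InfCl (SigmaPi S 0).2 φ →
    ∀ (a : Fin n → ℕ) (r : ℝ), IsOpen {x : SCode S | x.eval n φ a < r} := by
  intro n φ h
  induction h with
  | base hq => exact fun a r => isOpen_qf _ hq a r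
  | @step n φ h ih =>
    intro a r
    have : {x : SCode S | x.eval n (CFormula.inf φ) a < r} =
        ⋃ k : ℕ, {x : SCode S | x.eval (n + 1) φ (Fin.snoc a k) < r} := by
      ext x
      simp only [Set.mem_setOf_eq, Set.mem_iUnion]
      constructor
      · intro hlt
        exact exists_lt_of_ciInf_lt hlt
      · rintro ⟨k, hk⟩
        exact lt_of_le_of_lt
          (ciInf_le (bddBelow_range_of fun k => (code_eval_bdd x φ _).1) k) hk
    rw [this]
    exact isOpen_iUnion fun k => ih _ _

theorem isGd_pi2 : ∀ {n : ℕ} {φ : CFormula S n}, SupCl (SigmaPi S 1).1 φ →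
    ∀ (a : Fin n → ℕ) (q : ℝ), IsGδ {x : SCode S | x.eval n φ a ≤ q} := by
  intro n φ h
  induction h with
  | base hs =>
    intro a q
    rename_i n φ
    have : {x : SCode S | x.eval n φ a ≤ q} =
        ⋂ m : ℕ, {x : SCode S | x.eval n φ a < q + 1 / (m + 1)} := by
      ext x
      simp only [Set.mem_setOf_eq, Set.mem_iInter]
      constructor
      · intro hle m
        have : (0:ℝ) < 1 / (m + 1) := by positivity
        linarith
      · intro hm
        by_contra hq
        push_neg at hq
        obtain ⟨m, hm'⟩ := exists_nat_one_div_lt (show (0:ℝ) < x.eval n φ a - q by linarith)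
        have := hm m
        linarith
    rw [this]
    exact IsGδ.iInter fun m => (isOpen_sigma1 hs a _).isGδ
  | @step n φ h ih =>
    intro a q
    have : {x : SCode S | x.eval n (CFormula.sup φ) a ≤ q} =
        ⋂ k : ℕ, {x : SCode S | x.eval (n + 1) φ (Fin.snoc a k) ≤ q} := by
      ext x
      simp only [Set.mem_setOf_eq, Set.mem_iInter]
      exact ciSup_le_iff (bddAbove_range_of fun k => (code_eval_bdd x φ _).2)
    rw [this]
    exact IsGδ.iInter fun k => ih _ _

end GdAux

namespace GdAux

open Filter Topology

variable {S : CSig}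

/-- Limit along an ultrafilter. -/
noncomputable def ulim (U : Ultrafilter ℕ) (r : ℕ → ℝ) : ℝ :=
  if h : ∃ L, Tendsto r ↑U (nhds L) then h.choose else 0

theorem tendsto_ulim (U : Ultrafilter ℕ) {r : ℕ → ℝ} (hr : ∀ m, r m ∈ Set.Icc (0:ℝ) 1) :
    Tendsto r ↑U (nhds (ulim U r)) := by
  have hex : ∃ L, Tendsto r ↑U (nhds L) := by
    have hle : (Ultrafilter.map r U : Filter ℝ) ≤ Filter.principal (Set.Icc (0:ℝ) 1) := by
      rw [Ultrafilter.coe_map, Filter.le_principal_iff, Filter.mem_map]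
      exact Filter.mem_of_superset Filter.univ_mem fun m _ => hr m
    obtain ⟨L, _, hL⟩ := isCompact_Icc.ultrafilter_le_nhds (Ultrafilter.map r U) hle
    rw [Ultrafilter.coe_map] at hL
    exact ⟨L, hL⟩
  rw [ulim, dif_pos hex]
  exact hex.choose_spec

theorem ulim_eq (U : Ultrafilter ℕ) {r : ℕ → ℝ} {L : ℝ} (h : Tendsto r ↑U (nhds L)) :
    ulim U r = L := by
  rw [ulim, dif_pos ⟨L, h⟩]
  exact tendsto_nhds_unique (Exists.choose_spec (⟨L, h⟩ : ∃ L, Tendsto r ↑U (nhds L))) h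

variable (U : Ultrafilter ℕ) (M : ℕ → CStructure S)

/-- The metric ultraproduct pre-structure of a sequence of structures. -/
noncomputable def uProd : CPre S where
  Carrier := ∀ m, (M m).Carrier
  pm :=
    { dist := fun f g => ulim U fun m => dist (f m) (g m)
      dist_self := fun f => ulim_eq U (by simp only [dist_self]; exact tendsto_const_nhds)
      dist_comm := fun f g => by simp only [dist_comm]
      dist_triangle := fun f g h => by
        have h1 := tendsto_ulim U (r := fun m => dist (f m) (h m))
          (fun m => ⟨dist_nonneg, (M m).bounded _ _⟩)
        have h2 := tendsto_ulim U (r := fun m => dist (f m) (g m))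
          (fun m => ⟨dist_nonneg, (M m).bounded _ _⟩)
        have h3 := tendsto_ulim U (r := fun m => dist (g m) (h m))
          (fun m => ⟨dist_nonneg, (M m).bounded _ _⟩)
        exact le_of_tendsto_of_tendsto' h1 (h2.add h3) fun m => dist_triangle _ _ _ }
  nonempty := ⟨fun m => Classical.choice (M m).nonempty⟩
  bounded := fun f g =>
    le_of_tendsto (tendsto_ulim U fun m => ⟨dist_nonneg, (M m).bounded _ _⟩)
      (Filter.Eventually.of_forall fun m => (M m).bounded _ _)
  rel := fun i f => ulim U fun m => (M m).rel i fun j => f j m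
  rel_nonneg := fun i f =>
    ge_of_tendsto (tendsto_ulim U fun m => ⟨(M m).rel_nonneg _ _, (M m).rel_le_one _ _⟩)
      (Filter.Eventually.of_forall fun m => (M m).rel_nonneg _ _)
  rel_le_one := fun i f =>
    le_of_tendsto (tendsto_ulim U fun m => ⟨(M m).rel_nonneg _ _, (M m).rel_le_one _ _⟩)
      (Filter.Eventually.of_forall fun m => (M m).rel_le_one _ _)
  rel_uc := by
    intro i ε hε v w h
    have hd : ∀ j, ∀ᶠ m in ↑U, dist (v j m) (w j m) < S.modulus i ε := by
      intro j
      have := tendsto_ulim U (r := fun m => dist (v j m) (w j m))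
        (fun m => ⟨dist_nonneg, (M m).bounded _ _⟩)
      exact this.eventually_lt_const (h j)
    have hall : ∀ᶠ m in ↑U, ∀ j, dist (v j m) (w j m) < S.modulus i ε := by
      exact (Filter.eventually_all).mpr hd
    have hbound : ∀ᶠ m in ↑U,
        |(M m).rel i (fun j => v j m) - (M m).rel i (fun j => w j m)| ≤ ε :=
      hall.mono fun m hm => (M m).rel_uc i ε hε _ _ hm
    have t1 := tendsto_ulim U (r := fun m => (M m).rel i fun j => v j m)
      (fun m => ⟨(M m).rel_nonneg _ _, (M m).rel_le_one _ _⟩)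
    have t2 := tendsto_ulim U (r := fun m => (M m).rel i fun j => w j m)
      (fun m => ⟨(M m).rel_nonneg _ _, (M m).rel_le_one _ _⟩)
    exact le_of_tendsto ((t1.sub t2).abs) hbound

/-- Łoś's theorem for the ultraproduct pre-structure. -/
theorem los : ∀ {n : ℕ} (φ : CFormula S n) (v : Fin n → (∀ m, (M m).Carrier)),
    Tendsto (fun m => (M m).eval n φ fun i => v i m) ↑U
      (nhds ((uProd U M).eval n φ v)) := by
  intro n φ
  induction φ with
  | dst a b =>
    intro v
    exact tendsto_ulim U fun m => ⟨dist_nonneg, (M m).bounded _ _⟩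
  | rel i ts =>
    intro v
    exact tendsto_ulim U fun m => ⟨(M m).rel_nonneg _ _, (M m).rel_le_one _ _⟩
  | const q => intro v; exact tendsto_const_nhds
  | fmin φ₁ φ₂ ih₁ ih₂ => intro v; exact (ih₁ v).min (ih₂ v)
  | fmax φ₁ φ₂ ih₁ ih₂ => intro v; exact (ih₁ v).max (ih₂ v)
  | neg φ₁ ih₁ => intro v; exact tendsto_const_nhds.sub (ih₁ v)
  | addT φ₁ φ₂ ih₁ ih₂ => intro v; exact tendsto_const_nhds.min ((ih₁ v).add (ih₂ v))
  | subT φ₁ φ₂ ih₁ ih₂ => intro v; exact tendsto_const_nhds.max ((ih₁ v).sub (ih₂ v))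
  | absd φ₁ φ₂ ih₁ ih₂ => intro v; exact ((ih₁ v).sub (ih₂ v)).abs
  | scale q φ₁ ih₁ => intro v; exact tendsto_const_nhds.mul (ih₁ v)
  | @inf n φ₁ ih₁ =>
    intro v
    have hsnoc : ∀ (g : ∀ m, (M m).Carrier) (m : ℕ),
        (fun i => (Fin.snoc v g : Fin _ → ∀ m, (M m).Carrier) i m) =
          Fin.snoc (fun i => v i m) (g m) := by
      intro g m
      exact Fin.comp_snoc (fun h : ∀ m, (M m).Carrier => h m) v g
    set I : ℕ → ℝ := fun m => (M m).eval n (CFormula.inf φ₁) fun i => v i m with hI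
    have hIval : ∀ m, I m = ⨅ x : (M m).Carrier,
        (M m).eval (n + 1) φ₁ (Fin.snoc (fun i => v i m) x) := fun m => rfl
    have hIbdd : ∀ m, I m ∈ Set.Icc (0:ℝ) 1 := fun m => ⟨(eval_bddM _ _ _).1, (eval_bddM _ _ _).2⟩
    have hL := tendsto_ulim U hIbdd
    set L := ulim U I with hLdef
    set J := (uProd U M).eval n (CFormula.inf φ₁) v with hJ
    have hJval : J = ⨅ g : (uProd U M).Carrier, (uProd U M).eval (n + 1) φ₁ (Fin.snoc v g) := rfl
    have hLJ : L ≤ J := by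
      rw [hJval]
      refine le_ciInf fun g => ?_
      have hg := ih₁ (Fin.snoc v g)
      have heq : ∀ m, ((M m).eval (n + 1) φ₁ fun i => (Fin.snoc v g : Fin _ → _) i m) =
          (M m).eval (n + 1) φ₁ (Fin.snoc (fun i => v i m) (g m)) := by
        intro m; rw [hsnoc g m]
      refine le_of_tendsto_of_tendsto' hL hg fun m => ?_
      rw [heq m, hIval m]
      exact ciInf_le (bddBelow_range_of fun x => (eval_bddM _ _ _).1) (g m)
    have hJL : J ≤ L := by
      refine le_of_forall_pos_le_add fun ε hε => ?_
      have hch : ∀ m, ∃ x : (M m).Carrier,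
          (M m).eval (n + 1) φ₁ (Fin.snoc (fun i => v i m) x) < I m + ε := by
        intro m
        apply exists_lt_of_ciInf_lt
        rw [← hIval m]
        linarith
      choose g hgs using hch
      have hg := ih₁ (Fin.snoc v g)
      have heq : ∀ m, ((M m).eval (n + 1) φ₁ fun i => (Fin.snoc v g : Fin _ → _) i m) =
          (M m).eval (n + 1) φ₁ (Fin.snoc (fun i => v i m) (g m)) := by
        intro m; rw [hsnoc g m]
      have h1 : J ≤ (uProd U M).eval (n + 1) φ₁ (Fin.snoc v g) := by
        rw [hJval]
        exact ciInf_le (bddBelow_range_of fun x => (eval_bdd _ _ _).1) g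
      refine le_trans h1 ?_
      refine le_of_tendsto_of_tendsto' hg (hL.add tendsto_const_nhds) fun m => ?_
      rw [heq m]
      exact le_of_lt (hgs m)
    have : J = L := le_antisymm hJL hLJ
    rw [this]
    exact hL
  | @sup n φ₁ ih₁ =>
    intro v
    have hsnoc : ∀ (g : ∀ m, (M m).Carrier) (m : ℕ),
        (fun i => (Fin.snoc v g : Fin _ → ∀ m, (M m).Carrier) i m) =
          Fin.snoc (fun i => v i m) (g m) := by
      intro g m
      exact Fin.comp_snoc (fun h : ∀ m, (M m).Carrier => h m) v g
    set I : ℕ → ℝ := fun m => (M m).eval n (CFormula.sup φ₁) fun i => v i m with hI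
    have hIval : ∀ m, I m = ⨆ x : (M m).Carrier,
        (M m).eval (n + 1) φ₁ (Fin.snoc (fun i => v i m) x) := fun m => rfl
    have hIbdd : ∀ m, I m ∈ Set.Icc (0:ℝ) 1 := fun m => ⟨(eval_bddM _ _ _).1, (eval_bddM _ _ _).2⟩
    have hL := tendsto_ulim U hIbdd
    set L := ulim U I with hLdef
    set J := (uProd U M).eval n (CFormula.sup φ₁) v with hJ
    have hJval : J = ⨆ g : (uProd U M).Carrier, (uProd U M).eval (n + 1) φ₁ (Fin.snoc v g) := rfl
    have hLJ : J ≤ L := by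
      rw [hJval]
      refine ciSup_le fun g => ?_
      have hg := ih₁ (Fin.snoc v g)
      have heq : ∀ m, ((M m).eval (n + 1) φ₁ fun i => (Fin.snoc v g : Fin _ → _) i m) =
          (M m).eval (n + 1) φ₁ (Fin.snoc (fun i => v i m) (g m)) := by
        intro m; rw [hsnoc g m]
      refine le_of_tendsto_of_tendsto' hg hL fun m => ?_
      rw [heq m, hIval m]
      exact le_ciSup (bddAbove_range_of fun x => (eval_bddM _ _ _).2) (g m)
    have hJL : L ≤ J := by
      refine le_of_forall_pos_le_add fun ε hε => ?_
      have hch : ∀ m, ∃ x : (M m).Carrier,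
          I m - ε < (M m).eval (n + 1) φ₁ (Fin.snoc (fun i => v i m) x) := by
        intro m
        apply exists_lt_of_lt_ciSup
        rw [← hIval m]
        linarith
      choose g hgs using hch
      have hg := ih₁ (Fin.snoc v g)
      have heq : ∀ m, ((M m).eval (n + 1) φ₁ fun i => (Fin.snoc v g : Fin _ → _) i m) =
          (M m).eval (n + 1) φ₁ (Fin.snoc (fun i => v i m) (g m)) := by
        intro m; rw [hsnoc g m]
      have h1 : (uProd U M).eval (n + 1) φ₁ (Fin.snoc v g) ≤ J := by
        rw [hJval]
        exact le_ciSup (bddAbove_range_of fun x => (eval_bdd _ _ _).2) g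
      refine le_trans ?_ (add_le_add_left h1 ε)
      refine le_of_tendsto_of_tendsto' hL (hg.add tendsto_const_nhds) fun m => ?_
      rw [heq m]
      have := hgs m
      linarith
    have : J = L := le_antisymm hLJ hJL
    rw [this]
    exact hL

end GdAux

namespace GdAux

open Filter Topology

variable {S : CSig}

/-- Compactness via ultraproducts: open axioms of a theory can be strengthened
to rational closed bounds. -/
theorem exists_rat_entails (T' : CTheory S) (hT' : IsTheory T') {A : Set (CSentence S × ℝ)}
    (hax : ∀ M : CStructure S, M.SatT T' ↔ ∀ c ∈ A, M.sval c.1 < c.2)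
    {c : CSentence S × ℝ} (hc : c ∈ A) :
    ∃ q : ℚ, (q : ℝ) < c.2 ∧ Entails T' (c.1, (q : ℝ)) := by
  by_contra hcon
  push_neg at hcon
  have hM : ∀ m : ℕ, ∃ M : CStructure S, M.SatT T' ∧ c.2 - 1 / (m + 1) < M.sval c.1 := by
    intro m
    have hpos : (0:ℝ) < 1 / (m + 1) := by positivity
    obtain ⟨q, hq1, hq2⟩ := exists_rat_btwn (show c.2 - 1 / (m + 1) < c.2 by linarith)
    have hne := hcon q hq2
    simp only [Entails, not_forall, not_le] at hne
    obtain ⟨M, hM1, hM2⟩ := hne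
    exact ⟨M, hM1, lt_trans hq1 hM2⟩
  choose M hMs hMv using hM
  set U : Ultrafilter ℕ := Filter.hyperfilter ℕ with hU
  set N : CStructure S := (uProd U M).toC with hN
  have hsval : ∀ χ : CSentence S, Tendsto (fun m => (M m).sval χ) ↑U (nhds (N.sval χ)) := by
    intro χ
    set v0 : Fin 0 → (∀ m, (M m).Carrier) := fun i => i.elim0 with hv0
    have h := los U M (n := 0) χ v0
    have h2 : N.sval χ = (uProd U M).eval 0 χ v0 := by
      rw [sval_toC _ χ]; rfl
    rw [h2]
    have h3 : (fun m => (M m).sval χ) = fun m => (M m).eval 0 χ fun i => v0 i m := by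
      funext m
      exact congrArg _ (funext fun i => i.elim0)
    rw [h3]
    exact h
  have hNsat : N.SatT T' := fun cc hcc =>
    le_of_tendsto (hsval cc.1) (Filter.Eventually.of_forall fun m => hMs m cc hcc)
  have hlt := (hax N).mp hNsat c hc
  have hge : c.2 ≤ N.sval c.1 := by
    by_contra hlt2
    push_neg at hlt2
    obtain ⟨k, hk⟩ := exists_nat_one_div_lt (show (0:ℝ) < c.2 - N.sval c.1 by linarith)
    have hev : ∀ᶠ m in ↑U, c.2 - 1 / (k + 1) ≤ (M m).sval c.1 := by
      have hcof : ∀ᶠ m in (Filter.cofinite : Filter ℕ), k ≤ m := by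
        rw [Nat.cofinite_eq_atTop]
        exact Filter.eventually_ge_atTop k
      refine (hcof.filter_mono (Filter.hyperfilter_le_cofinite)).mono fun m hm => ?_
      have h1 := hMv m
      have h2 : (1:ℝ) / (m + 1) ≤ 1 / (k + 1) := one_div_mono hm
      linarith
    have := ge_of_tendsto (hsval c.1) hev
    linarith
  linarith

end GdAux

/-- For an inductive theory `T'`, the set `𝔖_{T'}` is a `G_δ` subset of
the Polish space `𝔖`. -/
theorem ST_isGdelta_of_inductive (S : CSig) (T' : CTheory S) (hT' : IsTheory T')
    (hind : IsInductiveTheory T') :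
    IsGδ {x : SCode S | x.SatT T'} := by
  classical
  obtain ⟨A, hA, hax⟩ := hind
  set D : Set (CSentence S × ℚ) :=
    {p | IsPiN S 2 p.1 ∧ Entails T' (p.1, (p.2 : ℝ))} with hD
  have hset : {x : SCode S | x.SatT T'} =
      ⋂ p ∈ D, {x : SCode S | x.eval 0 p.1 (fun i => i.elim0) ≤ (p.2 : ℝ)} := by
    ext x
    simp only [Set.mem_setOf_eq, Set.mem_iInter]
    constructor
    · intro hx p hp
      exact hx (p.1, (p.2 : ℝ)) (hT'.2 _ hp.2)
    · intro hx
      have hopen : ∀ c ∈ A, (GdAux.codeStr x).sval c.1 < c.2 := by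
        intro c hc
        obtain ⟨q, hq, hent⟩ := GdAux.exists_rat_entails T' hT' hax hc
        have hpD : ((c.1, q) : CSentence S × ℚ) ∈ D := ⟨(hA c hc).1, hent⟩
        have hle := hx (c.1, q) hpD
        rw [GdAux.sval_codeStr]
        calc x.sval c.1 ≤ (q : ℝ) := hle
          _ < c.2 := hq
      have hsat := (hax _).mpr hopen
      intro c hc
      rw [← GdAux.sval_codeStr x]
      exact hsat c hc
  rw [hset]
  refine IsGδ.biInter (Set.to_countable D) fun p hp => ?_
  exact GdAux.isGd_pi2 hp.1 _ _
end

section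
/- A complete separable metric space M of diameter ≤ 1 is existentially closed among metric spaces of diameter ≤ 1 — meaning: for every metric space N ⊇ M of diameter ≤ 1, every point b ∈ N, every finite tuple a₁, …, aₙ ∈ M and every ε > 0 there exists y ∈ M with |d_M(y,aᵢ) − d_N(b,aᵢ)| ≤ ε for all i — if and only if M is isometric to the Urysohn space of diameter 1. -/
open TopologicalSpace

/-- The set `Met₁` of all metrics on `ℕ` with values in `[0,1]`, inside the product
space `[0,1]^{ℕ×ℕ}`. -/
def Met1 : Set ((ℕ × ℕ) → Set.Icc (0 : ℝ) 1) :=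
  {f | (∀ i, (f (i, i) : ℝ) = 0) ∧ (∀ i j, (f (i, j) : ℝ) = f (j, i)) ∧
    (∀ i j k, (f (i, k) : ℝ) ≤ f (i, j) + f (j, k)) ∧
    ∀ i j, i ≠ j → (0 : ℝ) < f (i, j)}

/-- The approximate one-point extension property for a metric space of diameter `≤ 1`:
every metrically consistent prescription of distances to a finite tuple is realized
up to any `ε > 0`. -/
def ApproxExtProp (M : Type) [MetricSpace M] : Prop :=
  ∀ (n : ℕ) (a : Fin n → M) (r : Fin n → ℝ),
    (∀ i, 0 ≤ r i ∧ r i ≤ 1) →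
    (∀ i j, |r i - r j| ≤ dist (a i) (a j) ∧ dist (a i) (a j) ≤ r i + r j) →
    ∀ ε : ℝ, 0 < ε → ∃ y : M, ∀ i, |dist y (a i) - r i| ≤ ε

/-- The exact one-point extension property for a metric space of diameter `≤ 1`:
every metrically consistent prescription of distances to a finite tuple is realized
exactly. -/
def ExactExtProp (M : Type) [MetricSpace M] : Prop :=
  ∀ (n : ℕ) (a : Fin n → M) (r : Fin n → ℝ),
    (∀ i, 0 ≤ r i ∧ r i ≤ 1) →
    (∀ i j, |r i - r j| ≤ dist (a i) (a j) ∧ dist (a i) (a j) ≤ r i + r j) →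
    ∃ y : M, ∀ i, dist y (a i) = r i

/-- `U` is (a copy of) the Urysohn space of diameter 1: a complete separable metric
space with all distances `≤ 1` satisfying the exact one-point extension property. -/
def IsUrysohn (U : Type) [MetricSpace U] : Prop :=
  CompleteSpace U ∧ SeparableSpace U ∧ (∀ x y : U, dist x y ≤ 1) ∧ ExactExtProp U

section Aux

variable {M : Type} [MetricSpace M]

/-- distance function on a one-point extension of `M`. -/
noncomputable def optD (f : M → ℝ) : Option M → Option M → ℝ
  | some x, some y => dist x y
  | some x, none => f x
  | none, some y => f y
  | none, none => 0

/-- One point metric extension of `M`, attaching a new point at distance `f x` from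
each `x : M`. -/
noncomputable def optMetric (f : M → ℝ) (hpos : ∀ x, 0 < f x)
    (hlip : ∀ x y, f x ≤ f y + dist x y) (htri : ∀ x y, dist x y ≤ f x + f y) :
    MetricSpace (Option M) where
  dist := optD f
  dist_self := by rintro (_ | x) <;> simp [optD]
  dist_comm := by rintro (_ | x) (_ | y) <;> simp [optD, dist_comm]
  dist_triangle := by
    rintro (_ | x) (_ | y) (_ | z) <;> simp only [optD]
    · norm_num
    · linarith [hpos z]
    · linarith [hpos y]
    · linarith [hlip z y, dist_comm z y]
    · linarith [hpos x]
    · exact htri x z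
    · linarith [hlip x y, dist_comm x y]
    · exact dist_triangle x y z
  eq_of_dist_eq_zero := by
    rintro (_ | x) (_ | y) h <;> simp only [optD] at h
    · rfl
    · exact absurd h (hpos y).ne'
    · exact absurd h (hpos x).ne'
    · exact congrArg some (eq_of_dist_eq_zero h)

theorem approx_of_ec (M : Type) [MetricSpace M] (hbM : ∀ x y : M, dist x y ≤ 1)
    (hec : ∀ (N : Type) (_ : MetricSpace N), (∀ x y : N, dist x y ≤ 1) →
      ∀ g : M → N, Isometry g → ∀ b : N, ∀ (n : ℕ) (a : Fin n → M),
        ∀ ε : ℝ, 0 < ε → ∃ y : M, ∀ i, |dist y (a i) - dist b (g (a i))| ≤ ε) :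
    ApproxExtProp M := by
  intro n a r hr1 hr2 ε hε
  rcases Nat.eq_zero_or_pos n with hn | hn
  · -- use the trivial one-point extension to see `M` is nonempty
    subst hn
    letI instN := optMetric (M := M) (fun _ => 1) (fun _ => one_pos)
      (fun x y => by
        show (1 : ℝ) ≤ 1 + dist x y
        linarith [dist_nonneg (x := x) (y := y)])
      (fun x y => by
        show dist x y ≤ 1 + 1
        linarith [hbM x y])
    have hdiam : ∀ p q : Option M, dist p q ≤ 1 := by
      rintro (_ | x) (_ | y)
      · show (0 : ℝ) ≤ 1; norm_num
      · show (1 : ℝ) ≤ 1; exact le_refl 1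
      · show (1 : ℝ) ≤ 1; exact le_refl 1
      · show dist x y ≤ 1; exact hbM x y
    obtain ⟨y, _⟩ := hec (Option M) instN hdiam some
      (Isometry.of_dist_eq fun _ _ => rfl) none 0 a ε hε
    exact ⟨y, fun i => i.elim0⟩
  by_cases h0 : ∃ i, r i = 0
  · obtain ⟨i, hi⟩ := h0
    refine ⟨a i, fun j => ?_⟩
    have t1 := (hr2 i j).1
    have t2 := (hr2 i j).2
    rw [hi, zero_sub, abs_neg, abs_of_nonneg (hr1 j).1] at t1
    rw [hi, zero_add] at t2
    have : dist (a i) (a j) = r j := le_antisymm t2 t1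
    rw [this]
    simpa using hε.le
  push_neg at h0
  have hrpos : ∀ i, 0 < r i := fun i => lt_of_le_of_ne (hr1 i).1 (Ne.symm (h0 i))
  haveI : Nonempty (Fin n) := Fin.pos_iff_nonempty.mp hn
  have hne : (Finset.univ : Finset (Fin n)).Nonempty := Finset.univ_nonempty
  set A : M → ℝ := fun x => Finset.univ.inf' hne (fun i => r i + dist x (a i)) with hA
  have hA0 : ∀ x, 0 < A x := fun x => by
    show 0 < Finset.univ.inf' hne fun i => r i + dist x (a i)
    rw [Finset.lt_inf'_iff]
    intro i _
    have := dist_nonneg (x := x) (y := a i)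
    linarith [hrpos i]
  have hAle : ∀ x y, A x ≤ A y + dist x y := by
    intro x y
    obtain ⟨j, _, hj⟩ := Finset.exists_mem_eq_inf' hne (fun i => r i + dist y (a i))
    have h1 : A x ≤ r j + dist x (a j) := Finset.inf'_le _ (Finset.mem_univ j)
    have h2 := dist_triangle x y (a j)
    have h3 : A y = r j + dist y (a j) := hj
    linarith
  set f : M → ℝ := fun x => min (A x) 1 with hf
  have hpos : ∀ x, 0 < f x := fun x => lt_min (hA0 x) one_pos
  have hf1 : ∀ x, f x ≤ 1 := fun x => min_le_right _ _
  have hlip : ∀ x y, f x ≤ f y + dist x y := by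
    intro x y
    rcases le_total (A y) 1 with hc | hc
    · have hfy : f y = A y := min_eq_left hc
      have hfx : f x ≤ A x := min_le_left _ _
      have := hAle x y
      linarith
    · have hfy : f y = 1 := min_eq_right hc
      have hfx : f x ≤ 1 := min_le_right _ _
      have := dist_nonneg (x := x) (y := y)
      linarith
  have htri : ∀ x y, dist x y ≤ f x + f y := by
    intro x y
    rcases le_total (A x) 1 with hx | hx
    · rcases le_total (A y) 1 with hy | hy
      · have hfx : f x = A x := min_eq_left hx
        have hfy : f y = A y := min_eq_left hy
        obtain ⟨i, _, hi⟩ := Finset.exists_mem_eq_inf' hne (fun i => r i + dist x (a i))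
        obtain ⟨j, _, hj⟩ := Finset.exists_mem_eq_inf' hne (fun i => r i + dist y (a i))
        have hAx : A x = r i + dist x (a i) := hi
        have hAy : A y = r j + dist y (a j) := hj
        have t1 := dist_triangle4 x (a i) (a j) y
        have t2 := (hr2 i j).2
        have t3 := dist_comm y (a j)
        linarith
      · have hfy : f y = 1 := min_eq_right hy
        have := hpos x
        linarith [hbM x y]
    · have hfx : f x = 1 := min_eq_right hx
      have := hpos y
      linarith [hbM x y]
  have hfa : ∀ i, f (a i) = r i := by
    intro i
    have hAi : A (a i) = r i := by
      refine le_antisymm ?_ ?_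
      · have h1 : A (a i) ≤ r i + dist (a i) (a i) :=
          Finset.inf'_le _ (Finset.mem_univ i)
        simpa using h1
      · show r i ≤ Finset.univ.inf' hne fun j => r j + dist (a i) (a j)
        rw [Finset.le_inf'_iff]
        intro j _
        have h2 := (hr2 j i).1
        rw [abs_sub_le_iff] at h2
        have t := dist_comm (a i) (a j)
        linarith [h2.2]
    have : f (a i) = min (A (a i)) 1 := rfl
    rw [this, hAi]
    exact min_eq_left (hr1 i).2
  letI instN := optMetric f hpos hlip htri
  have hdiam : ∀ p q : Option M, dist p q ≤ 1 := by
    rintro (_ | x) (_ | y)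
    · show (0 : ℝ) ≤ 1; norm_num
    · show f y ≤ 1; exact hf1 y
    · show f x ≤ 1; exact hf1 x
    · show dist x y ≤ 1; exact hbM x y
  obtain ⟨y, hy⟩ := hec (Option M) instN hdiam some
    (Isometry.of_dist_eq fun _ _ => rfl) none n a ε hε
  refine ⟨y, fun i => ?_⟩
  have hdb : dist (none : Option M) (some (a i)) = r i := by
    show optD f none (some (a i)) = r i
    simp [optD, hfa i]
  have := hy i
  rwa [hdb] at this

theorem exact_of_approx (M : Type) [MetricSpace M] [CompleteSpace M]
    (hbM : ∀ x y : M, dist x y ≤ 1) (h : ApproxExtProp M) : ExactExtProp M := by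
  intro n a r hr1 hr2
  rcases Nat.eq_zero_or_pos n with hn | hn
  · subst hn
    obtain ⟨y, _⟩ := h 0 a r hr1 hr2 1 one_pos
    exact ⟨y, fun i => i.elim0⟩
  haveI : Nonempty (Fin n) := Fin.pos_iff_nonempty.mp hn
  have step : ∀ e : ℝ, 0 < e → ∀ z : M, (∀ i, |dist z (a i) - r i| ≤ e) →
      ∃ w : M, (∀ i, |dist w (a i) - r i| ≤ e / 2) ∧ dist w z ≤ e + e / 2 := by
    intro e he z hz
    set δ := Finset.univ.sup' Finset.univ_nonempty
      (fun i => |dist z (a i) - r i|) with hδdef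
    have hmem : ∀ i, |dist z (a i) - r i| ≤ δ := by
      intro i
      rw [hδdef]
      exact Finset.le_sup' (fun j => |dist z (a j) - r j|) (Finset.mem_univ i)
    have hδ0 : 0 ≤ δ :=
      le_trans (abs_nonneg _) (hmem (Classical.arbitrary (Fin n)))
    have hδe : δ ≤ e := by
      rw [hδdef]; exact Finset.sup'_le _ _ fun i _ => hz i
    have hδ1 : δ ≤ 1 := by
      rw [hδdef]
      refine Finset.sup'_le _ _ fun i _ => ?_
      have h1 := hbM z (a i)
      have h2 := (hr1 i).1
      have h3 := (hr1 i).2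
      have h4 := dist_nonneg (x := z) (y := a i)
      rw [abs_sub_le_iff]
      constructor <;> linarith
    have hδi : ∀ i, δ ≤ r i + dist z (a i) := by
      intro i
      rw [hδdef]
      refine Finset.sup'_le _ _ fun j _ => ?_
      have t1 := dist_triangle z (a i) (a j)
      have t2 := (hr2 i j).1
      have t3 := (hr2 i j).2
      have t4 := dist_triangle (a i) z (a j)
      have t5 := dist_comm (a i) z
      rw [abs_sub_le_iff] at t2 ⊢
      constructor <;> linarith [t2.1, t2.2]
    have key : ∀ i, |r i - δ| ≤ dist (a i) z ∧ dist (a i) z ≤ r i + δ := by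
      intro i
      have h1 : |dist z (a i) - r i| ≤ δ := hmem i
      have h2 := hδi i
      rw [abs_sub_le_iff] at h1 ⊢
      rw [dist_comm (a i) z]
      exact ⟨⟨by linarith [h1.2], by linarith⟩, by linarith [h1.1]⟩
    set a' : Fin (n + 1) → M := Fin.snoc a z with ha'
    set r' : Fin (n + 1) → ℝ := Fin.snoc r δ with hr'
    have h1' : ∀ i, 0 ≤ r' i ∧ r' i ≤ 1 := by
      intro i
      refine Fin.lastCases ?_ (fun j => ?_) i
      · simp only [hr', Fin.snoc_last]
        exact ⟨hδ0, hδ1⟩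
      · simp only [hr', Fin.snoc_castSucc]
        exact hr1 j
    have h2' : ∀ i j, |r' i - r' j| ≤ dist (a' i) (a' j) ∧
        dist (a' i) (a' j) ≤ r' i + r' j := by
      intro i j
      refine Fin.lastCases ?_ (fun i' => ?_) i
      · refine Fin.lastCases ?_ (fun j' => ?_) j
        · simp only [ha', hr', Fin.snoc_last]
          refine ⟨by simp, by rw [dist_self]; linarith⟩
        · simp only [ha', hr', Fin.snoc_last, Fin.snoc_castSucc]
          obtain ⟨k1, k2⟩ := key j'
          rw [dist_comm z (a j'), abs_sub_comm]
          exact ⟨k1, by linarith⟩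
      · refine Fin.lastCases ?_ (fun j' => ?_) j
        · simp only [ha', hr', Fin.snoc_last, Fin.snoc_castSucc]
          exact ⟨(key i').1, by linarith [(key i').2]⟩
        · simp only [ha', hr', Fin.snoc_castSucc]
          exact hr2 i' j'
    obtain ⟨w, hw⟩ := h (n + 1) a' r' h1' h2' (e / 2) (by linarith)
    refine ⟨w, fun i => ?_, ?_⟩
    · have := hw i.castSucc
      simpa only [ha', hr', Fin.snoc_castSucc] using this
    · have := hw (Fin.last n)
      simp only [ha', hr', Fin.snoc_last] at this
      have := abs_le.mp this
      linarith [this.2]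
  have step' : ∀ (k : ℕ) (z : M), (∀ i, |dist z (a i) - r i| ≤ (1 / 2 : ℝ) ^ k) →
      ∃ w : M, (∀ i, |dist w (a i) - r i| ≤ (1 / 2 : ℝ) ^ (k + 1)) ∧
        dist w z ≤ (3 / 2 : ℝ) * (1 / 2 : ℝ) ^ k := by
    intro k z hz
    obtain ⟨w, hw1, hw2⟩ := step ((1 / 2 : ℝ) ^ k) (by positivity) z hz
    refine ⟨w, fun i => ?_, by linarith⟩
    have := hw1 i
    rw [pow_succ]
    linarith
  choose! F hF1 hF2 using step'
  obtain ⟨y0, hy0⟩ := h n a r hr1 hr2 1 one_pos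
  set seq : ℕ → M := fun k => Nat.rec y0 F k with hseqdef
  have hseq : ∀ k, ∀ i, |dist (seq k) (a i) - r i| ≤ (1 / 2 : ℝ) ^ k := by
    intro k
    induction k with
    | zero => exact hy0
    | succ k ih => exact hF1 k (seq k) ih
  have hcauchy : CauchySeq seq := by
    refine cauchySeq_of_le_geometric (1 / 2) (3 / 2) (by norm_num) fun k => ?_
    have := hF2 k (seq k) (hseq k)
    rw [dist_comm]
    exact this
  obtain ⟨y, hy⟩ := cauchySeq_tendsto_of_complete hcauchy
  refine ⟨y, fun i => ?_⟩
  have h1 : Filter.Tendsto (fun k => dist (seq k) (a i)) Filter.atTop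
      (nhds (dist y (a i))) := hy.dist tendsto_const_nhds
  have h2 : Filter.Tendsto (fun k => dist (seq k) (a i)) Filter.atTop (nhds (r i)) := by
    have h0 : Filter.Tendsto (fun k => dist (seq k) (a i) - r i) Filter.atTop
        (nhds 0) := by
      have hp : Filter.Tendsto (fun k : ℕ => (1 / 2 : ℝ) ^ k) Filter.atTop (nhds 0) :=
        tendsto_pow_atTop_nhds_zero_of_lt_one (by norm_num) (by norm_num)
      refine squeeze_zero_norm (fun k => ?_) hp
      rw [Real.norm_eq_abs]
      exact hseq k i
    have h3 : Filter.Tendsto (fun _ : ℕ => r i) Filter.atTop (nhds (r i)) :=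
      tendsto_const_nhds
    have := h0.add h3
    simpa using this
  exact tendsto_nhds_unique h1 h2

end Aux

/-- A complete separable metric space `M` of diameter `≤ 1` is
existentially closed among metric spaces of diameter `≤ 1` — for every metric space
`N ⊇ M` of diameter `≤ 1`, every `b ∈ N`, every finite tuple from `M` and every `ε > 0`
the distances from `b` to the tuple are approximately realized inside `M` — if and only
if `M` is isometric to the Urysohn space of diameter 1. -/
theorem ec_iff_urysohn (M : Type) [MetricSpace M] [CompleteSpace M] [SeparableSpace M]
    (hbM : ∀ x y : M, dist x y ≤ 1) :
    (∀ (N : Type) (_ : MetricSpace N), (∀ x y : N, dist x y ≤ 1) →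
      ∀ g : M → N, Isometry g → ∀ b : N, ∀ (n : ℕ) (a : Fin n → M),
        ∀ ε : ℝ, 0 < ε → ∃ y : M, ∀ i, |dist y (a i) - dist b (g (a i))| ≤ ε) ↔
    (∃ (U : Type) (_ : MetricSpace U), IsUrysohn U ∧ Nonempty (M ≃ᵢ U)) := by
  constructor
  · intro hec
    have happrox := approx_of_ec M hbM hec
    have hexact := exact_of_approx M hbM happrox
    exact ⟨M, inferInstance, ⟨inferInstance, inferInstance, hbM, hexact⟩,
      ⟨IsometryEquiv.refl M⟩⟩
  · rintro ⟨U, instU, ⟨_, _, hU1, hUext⟩, ⟨e⟩⟩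
    intro N instN hN g hg b n a ε hε
    set r : Fin n → ℝ := fun i => dist b (g (a i)) with hrdef
    obtain ⟨y', hy'⟩ := hUext n (fun i => e (a i)) r
      (fun i => ⟨dist_nonneg, hN _ _⟩)
      (by
        intro i j
        have hda : dist (e (a i)) (e (a j)) = dist (g (a i)) (g (a j)) := by
          rw [e.dist_eq, hg.dist_eq]
        rw [hda]
        constructor
        · have := abs_dist_sub_le (g (a i)) (g (a j)) b
          rw [hrdef]
          simp only
          rw [dist_comm (g (a i)) b, dist_comm (g (a j)) b] at this
          exact this
        · have := dist_triangle (g (a i)) b (g (a j))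
          rw [hrdef]
          simp only
          rw [dist_comm (g (a i)) b] at this
          linarith)
    refine ⟨e.symm y', fun i => ?_⟩
    have hd : dist (e.symm y') (a i) = r i := by
      rw [← e.dist_eq, e.apply_symm_apply, hy' i]
    rw [hd]
    simpa [hrdef] using hε.le
end
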